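/- arXiv:1711.03011 — 3 statements merged into one kernel-verified Lean document; each statement's English description precedes it below -/
import Mathlib

section
/- Let f : (0,1) → ℝ be a nondecreasing step function with finitely many values, and 0 ≤ u < v ≤ 1 (interpreting f at endpoints via one-sided limits). With h^u_ε the normalized indicators h^u_ε = ε⁻¹𝟙_{[u,u+ε)} (suitably truncated at the boundary), one has (pr_f h^u_ε, pr_f h^v_ε)_{L²} → (1/m_f(u)) 𝟙_{f(u)=f(v)} as ε → 0+, where m_f(u) = leb{r : f(r) = f(u)}. -/
open MeasureTheory Set Filter

noncomputable section

/-- The level set of `f` through `w`, inside `(0,1)`. -/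
def levelSet (f : ℝ → ℝ) (w : ℝ) : Set ℝ := {r ∈ Set.Ioo (0:ℝ) 1 | f r = f w}

open Classical in
/-- The orthogonal projection `pr_f h` onto `σ(f)`-measurable functions, given by
averaging `h` over the level intervals of `f` (for step functions `f`). -/
def projFun (f h : ℝ → ℝ) (w : ℝ) : ℝ :=
  if 0 < volume (levelSet f w) then
    (∫ r in levelSet f w, h r) / (volume (levelSet f w)).toReal
  else h w

/-- The normalized indicator kernels `h^u_ε` (truncated at the boundary; at `u = 1`
the left-sided version is used). -/
def happrox (u ε : ℝ) : ℝ → ℝ := fun v =>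
  if u < 1 then Set.indicator (Set.Ico u (min (u + ε) 1)) (fun _ => 1 / min ε (1 - u)) v
  else Set.indicator (Set.Icc (max (1 - ε) 0) 1) (fun _ => 1 / min ε 1) v

lemma sep_of_finite {S : Set ℝ} (hS : S.Finite) (a : ℝ) :
    ∃ ε > 0, ∀ x ∈ S, |x - a| < ε → x = a := by
  have h2 : IsClosed (S \ {a}) := (hS.diff : (S \ {a}).Finite).isClosed
  have h3 : a ∈ (S \ {a})ᶜ := by simp
  obtain ⟨ε, hε, hball⟩ := Metric.isOpen_iff.1 h2.isOpen_compl a h3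
  refine ⟨ε, hε, fun x hx hlt => ?_⟩
  by_contra hne
  exact (hball (show x ∈ Metric.ball a ε by simpa [Real.dist_eq] using hlt)) ⟨hx, hne⟩

lemma const_right' (f : ℝ → ℝ) (hfin : (f '' Set.Icc (0:ℝ) 1).Finite)
    {w : ℝ} (hw : w ∈ Set.Ico (0:ℝ) 1)
    (hc : ContinuousWithinAt f (Set.Ici w) w) :
    ∃ δ > 0, w + δ ≤ 1 ∧ ∀ r ∈ Set.Ico w (w + δ), f r = f w := by
  obtain ⟨ε, hε, hsep⟩ := sep_of_finite hfin (f w)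
  rw [Metric.continuousWithinAt_iff] at hc
  obtain ⟨δ, hδ, hδc⟩ := hc ε hε
  refine ⟨min δ (1 - w), lt_min hδ (by linarith [hw.2]), by
    have := min_le_right δ (1 - w); linarith, fun r hr => ?_⟩
  have hr1 : r < 1 := by have := min_le_right δ (1 - w); have := hr.2; linarith
  have hrS : f r ∈ f '' Set.Icc (0:ℝ) 1 :=
    ⟨r, ⟨le_trans hw.1 hr.1, hr1.le⟩, rfl⟩
  refine hsep _ hrS ?_
  have : dist r w < δ := by
    rw [Real.dist_eq, abs_of_nonneg (by linarith [hr.1])]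
    have := min_le_left δ (1 - w); have := hr.2; linarith
  simpa [Real.dist_eq] using hδc hr.1 this

lemma const_left' (f : ℝ → ℝ) (hfin : (f '' Set.Icc (0:ℝ) 1).Finite)
    (hc : ContinuousWithinAt f (Set.Iic (1:ℝ)) 1) :
    ∃ δ > 0, δ ≤ 1 ∧ ∀ r ∈ Set.Ioc (1 - δ) 1, f r = f 1 := by
  obtain ⟨ε, hε, hsep⟩ := sep_of_finite hfin (f 1)
  rw [Metric.continuousWithinAt_iff] at hc
  obtain ⟨δ, hδ, hδc⟩ := hc ε hε
  refine ⟨min δ 1, lt_min hδ one_pos, min_le_right _ _, fun r hr => ?_⟩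
  have h1 : 1 - min δ 1 < r := hr.1
  have h0 : 0 ≤ r := by have := min_le_right δ 1; linarith
  have hrS : f r ∈ f '' Set.Icc (0:ℝ) 1 := ⟨r, ⟨h0, hr.2⟩, rfl⟩
  refine hsep _ hrS ?_
  have : dist r 1 < δ := by
    rw [Real.dist_eq, abs_of_nonpos (by linarith [hr.2])]
    have := min_le_left δ 1; linarith
  simpa [Real.dist_eq] using hδc hr.2 this

lemma levelSet_congr {f : ℝ → ℝ} {w w' : ℝ} (h : f w = f w') :
    levelSet f w = levelSet f w' := by
  unfold levelSet; rw [h]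

lemma levelSet_measurable (f : ℝ → ℝ) (hmono : MonotoneOn f (Set.Icc (0:ℝ) 1)) (w : ℝ) :
    MeasurableSet (levelSet f w) := by
  apply Set.OrdConnected.measurableSet
  constructor
  intro x hx y hy z hz
  have hxI : x ∈ Set.Icc (0:ℝ) 1 := ⟨hx.1.1.le, hx.1.2.le⟩
  have hyI : y ∈ Set.Icc (0:ℝ) 1 := ⟨hy.1.1.le, hy.1.2.le⟩
  have hzO : z ∈ Set.Ioo (0:ℝ) 1 := ⟨lt_of_lt_of_le hx.1.1 hz.1, lt_of_le_of_lt hz.2 hy.1.2⟩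
  have hzI : z ∈ Set.Icc (0:ℝ) 1 := ⟨hzO.1.le, hzO.2.le⟩
  exact ⟨hzO, le_antisymm (by rw [← hy.2]; exact hmono hzI hyI hz.2)
    (by rw [← hx.2]; exact hmono hxI hzI hz.1)⟩

lemma integral_indicator_level (f : ℝ → ℝ) (w : ℝ) {s : Set ℝ} (hs : MeasurableSet s) (κ : ℝ) :
    ∫ r in levelSet f w, s.indicator (fun _ => κ) r
      = (volume (s ∩ levelSet f w)).toReal * κ := by
  rw [MeasureTheory.integral_indicator hs, Measure.restrict_restrict hs,
    MeasureTheory.setIntegral_const, smul_eq_mul, Measure.real]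

lemma vol_level_pos_right (f : ℝ → ℝ) {w δ : ℝ} (hw0 : 0 ≤ w) (hδ : 0 < δ) (hb : w + δ ≤ 1)
    (hconst : ∀ r ∈ Set.Ico w (w + δ), f r = f w) : 0 < volume (levelSet f w) := by
  have hsub : Set.Ioo w (w + δ) ⊆ levelSet f w := fun r hr =>
    ⟨⟨lt_of_le_of_lt hw0 hr.1, lt_of_lt_of_le hr.2 hb⟩, hconst r ⟨hr.1.le, hr.2⟩⟩
  calc (0:ENNReal) < ENNReal.ofReal δ := by simpa using hδ
    _ = volume (Set.Ioo w (w + δ)) := by rw [Real.volume_Ioo, add_sub_cancel_left]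
    _ ≤ _ := measure_mono hsub

lemma vol_level_pos_left (f : ℝ → ℝ) {δ : ℝ} (hδ : 0 < δ) (hδ1 : δ ≤ 1)
    (hconst : ∀ r ∈ Set.Ioc (1 - δ) 1, f r = f 1) : 0 < volume (levelSet f 1) := by
  have hsub : Set.Ioo (1 - δ) 1 ⊆ levelSet f 1 := fun r hr =>
    ⟨⟨by linarith [hr.1], hr.2⟩, hconst r ⟨hr.1, hr.2.le⟩⟩
  calc (0:ENNReal) < ENNReal.ofReal δ := by simpa using hδ
    _ = volume (Set.Ioo (1 - δ) 1) := by rw [Real.volume_Ioo]; norm_num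
    _ ≤ _ := measure_mono hsub

lemma proj_eval_Ico (f : ℝ → ℝ) {u ε δ : ℝ} (hε : 0 < ε) (hεδ : ε ≤ δ)
    (hu0 : 0 ≤ u) (hub : u + δ ≤ 1)
    (hconst : ∀ r ∈ Set.Ico u (u + δ), f r = f u)
    {w : ℝ} (hw : 0 < volume (levelSet f w)) :
    projFun f (fun r => (Set.Ico u (u + ε)).indicator (fun _ => 1 / ε) r) w
      = if f w = f u then 1 / (volume (levelSet f u)).toReal else 0 := by
  rw [projFun, if_pos hw, integral_indicator_level f w measurableSet_Ico]
  by_cases hfw : f w = f u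
  · rw [if_pos hfw]
    have hLS : levelSet f w = levelSet f u := levelSet_congr hfw
    have hvol : volume (Set.Ico u (u + ε) ∩ levelSet f w) = ENNReal.ofReal ε := by
      apply le_antisymm
      · calc volume (Set.Ico u (u + ε) ∩ levelSet f w) ≤ volume (Set.Ico u (u + ε)) :=
            measure_mono inter_subset_left
          _ = ENNReal.ofReal ε := by rw [Real.volume_Ico, add_sub_cancel_left]
      · have hsub : Set.Ioo u (u + ε) ⊆ Set.Ico u (u + ε) ∩ levelSet f w := by
          intro r hr
          refine ⟨⟨hr.1.le, hr.2⟩,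
            ⟨⟨lt_of_le_of_lt hu0 hr.1, by linarith [hr.2]⟩, ?_⟩⟩
          rw [hfw]
          exact hconst r ⟨hr.1.le, by linarith [hr.2]⟩
        calc ENNReal.ofReal ε = volume (Set.Ioo u (u + ε)) := by
              rw [Real.volume_Ioo, add_sub_cancel_left]
          _ ≤ _ := measure_mono hsub
    rw [hvol, hLS, ENNReal.toReal_ofReal hε.le, mul_one_div, div_self hε.ne']
  · rw [if_neg hfw]
    have hempty : Set.Ico u (u + ε) ∩ levelSet f w = ∅ := by
      ext r
      simp only [mem_inter_iff, mem_empty_iff_false, iff_false, not_and]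
      intro hr1 hr2
      exact hfw (hr2.2.symm.trans (hconst r ⟨hr1.1, by linarith [hr1.2]⟩) ▸
        (hr2.2.symm.trans (hconst r ⟨hr1.1, by linarith [hr1.2]⟩)).symm ▸ rfl)
    rw [hempty]
    simp

lemma proj_eval_Icc (f : ℝ → ℝ) {ε δ : ℝ} (hε : 0 < ε) (hεδ : ε < δ) (hδ1 : δ ≤ 1)
    (hconst : ∀ r ∈ Set.Ioc (1 - δ) 1, f r = f 1)
    {w : ℝ} (hw : 0 < volume (levelSet f w)) :
    projFun f (fun r => (Set.Icc (1 - ε) 1).indicator (fun _ => 1 / ε) r) w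
      = if f w = f 1 then 1 / (volume (levelSet f 1)).toReal else 0 := by
  rw [projFun, if_pos hw, integral_indicator_level f w measurableSet_Icc]
  by_cases hfw : f w = f 1
  · rw [if_pos hfw]
    have hLS : levelSet f w = levelSet f 1 := levelSet_congr hfw
    have hvol : volume (Set.Icc (1 - ε) 1 ∩ levelSet f w) = ENNReal.ofReal ε := by
      apply le_antisymm
      · calc volume (Set.Icc (1 - ε) 1 ∩ levelSet f w) ≤ volume (Set.Icc (1 - ε) 1) :=
            measure_mono inter_subset_left
          _ = ENNReal.ofReal ε := by rw [Real.volume_Icc]; norm_num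
      · have hsub : Set.Ioo (1 - ε) 1 ⊆ Set.Icc (1 - ε) 1 ∩ levelSet f w := by
          intro r hr
          refine ⟨⟨hr.1.le, hr.2.le⟩, ⟨⟨by linarith [hr.1], hr.2⟩, ?_⟩⟩
          rw [hfw]
          exact hconst r ⟨by linarith [hr.1], hr.2.le⟩
        calc ENNReal.ofReal ε = volume (Set.Ioo (1 - ε) 1) := by
              rw [Real.volume_Ioo]; norm_num
          _ ≤ _ := measure_mono hsub
    rw [hvol, hLS, ENNReal.toReal_ofReal hε.le, mul_one_div, div_self hε.ne']
  · rw [if_neg hfw]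
    have hempty : Set.Icc (1 - ε) 1 ∩ levelSet f w = ∅ := by
      ext r
      simp only [mem_inter_iff, mem_empty_iff_false, iff_false, not_and]
      intro hr1 hr2
      exact hfw (hr2.2.symm ▸ (hconst r ⟨by linarith [hr1.1], hr1.2⟩ ▸ rfl))
    rw [hempty]
    simp

/-- for a nondecreasing step function `f` with finitely many values and
`0 ≤ u < v ≤ 1`, one has
`(pr_f h^u_ε, pr_f h^v_ε)_{L²} → (1/m_f(u)) 𝟙_{f(u)=f(v)}` as `ε → 0+`, where
`m_f(u) = leb{r : f r = f u}`. -/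
theorem stmt9 (f : ℝ → ℝ)
    (hmono : MonotoneOn f (Set.Icc (0:ℝ) 1))
    (hright : ∀ u ∈ Set.Ico (0:ℝ) 1, ContinuousWithinAt f (Set.Ici u) u)
    (hleft1 : ContinuousWithinAt f (Set.Iic (1:ℝ)) 1)
    (hfin : (f '' Set.Icc (0:ℝ) 1).Finite)
    (u v : ℝ) (hu : 0 ≤ u) (huv : u < v) (hv : v ≤ 1) :
    Tendsto
      (fun ε => ∫ w in Set.Ioo (0:ℝ) 1, projFun f (happrox u ε) w * projFun f (happrox v ε) w)
      (nhdsWithin 0 (Set.Ioi (0:ℝ)))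
      (nhds (if f u = f v then 1 / (volume (levelSet f u)).toReal else 0)) := by
  have hu1 : u < 1 := lt_of_lt_of_le huv hv
  have hv0 : 0 ≤ v := le_of_lt (lt_of_le_of_lt hu huv)
  obtain ⟨δu, hδu, hδu1, hcu⟩ := const_right' f hfin ⟨hu, hu1⟩ (hright u ⟨hu, hu1⟩)
  have hfin_u : volume (levelSet f u) ≠ ⊤ := by
    refine ne_top_of_le_ne_top ?_ (measure_mono (fun r hr => hr.1))
    simp
  have hposu : 0 < volume (levelSet f u) := vol_level_pos_right f hu hδu hδu1 hcu
  have hmu : 0 < (volume (levelSet f u)).toReal := ENNReal.toReal_pos hposu.ne' hfin_u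
  have hposw : ∀ w ∈ Set.Ioo (0:ℝ) 1, 0 < volume (levelSet f w) := by
    intro w hw
    obtain ⟨δ, hδ, h1, hc⟩ := const_right' f hfin ⟨hw.1.le, hw.2⟩ (hright w ⟨hw.1.le, hw.2⟩)
    exact vol_level_pos_right f hw.1.le hδ h1 hc
  -- evaluation of the projection of the `u`-kernel
  have keyu : ∀ ε ∈ Set.Ioo (0:ℝ) δu, ∀ w ∈ Set.Ioo (0:ℝ) 1,
      projFun f (happrox u ε) w
        = if f w = f u then 1 / (volume (levelSet f u)).toReal else 0 := by
    intro ε hε w hw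
    have h1 : happrox u ε = fun r => (Set.Ico u (u + ε)).indicator (fun _ => 1 / ε) r := by
      funext r
      rw [happrox]
      rw [if_pos hu1, min_eq_left (by linarith [hε.2] : u + ε ≤ 1),
        min_eq_left (by linarith [hε.2] : ε ≤ 1 - u)]
    rw [h1]
    exact proj_eval_Ico f hε.1 hε.2.le hu hδu1 hcu (hposw w hw)
  -- evaluation of the projection of the `v`-kernel
  have keyv : ∃ ε₀ > 0, ∀ ε ∈ Set.Ioo (0:ℝ) ε₀, ∀ w ∈ Set.Ioo (0:ℝ) 1,
      projFun f (happrox v ε) w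
        = if f w = f v then 1 / (volume (levelSet f v)).toReal else 0 := by
    rcases eq_or_lt_of_le hv with hv1 | hv1
    · subst hv1
      obtain ⟨δv, hδv, hδv1, hcv⟩ := const_left' f hfin hleft1
      refine ⟨δv, hδv, fun ε hε w hw => ?_⟩
      have h1 : happrox 1 ε = fun r => (Set.Icc (1 - ε) 1).indicator (fun _ => 1 / ε) r := by
        funext r
        rw [happrox, if_neg (lt_irrefl 1),
          max_eq_left (by linarith [hε.2] : (0:ℝ) ≤ 1 - ε),
          min_eq_left (by linarith [hε.2] : ε ≤ 1)]
      rw [h1]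
      exact proj_eval_Icc f hε.1 hε.2 hδv1 hcv (hposw w hw)
    · obtain ⟨δv, hδv, hδv1, hcv⟩ := const_right' f hfin ⟨hv0, hv1⟩ (hright v ⟨hv0, hv1⟩)
      refine ⟨δv, hδv, fun ε hε w hw => ?_⟩
      have h1 : happrox v ε = fun r => (Set.Ico v (v + ε)).indicator (fun _ => 1 / ε) r := by
        funext r
        rw [happrox, if_pos hv1, min_eq_left (by linarith [hε.2] : v + ε ≤ 1),
          min_eq_left (by linarith [hε.2] : ε ≤ 1 - v)]
      rw [h1]
      exact proj_eval_Ico f hε.1 hε.2.le hv0 hδv1 hcv (hposw w hw)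
  obtain ⟨ε₀, hε₀, keyv⟩ := keyv
  have hmem : Set.Ioo (0:ℝ) (min δu ε₀) ∈ nhdsWithin (0:ℝ) (Set.Ioi 0) :=
    Ioo_mem_nhdsGT_of_mem ⟨le_rfl, lt_min hδu hε₀⟩
  have heq : ∀ᶠ ε in nhdsWithin (0:ℝ) (Set.Ioi 0),
      (∫ w in Set.Ioo (0:ℝ) 1, projFun f (happrox u ε) w * projFun f (happrox v ε) w)
        = (if f u = f v then 1 / (volume (levelSet f u)).toReal else 0) := by
    refine eventually_of_mem hmem (fun ε hε => ?_)
    have hεu : ε ∈ Set.Ioo (0:ℝ) δu := ⟨hε.1, lt_of_lt_of_le hε.2 (min_le_left _ _)⟩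
    have hεv : ε ∈ Set.Ioo (0:ℝ) ε₀ := ⟨hε.1, lt_of_lt_of_le hε.2 (min_le_right _ _)⟩
    have hcongr : ∫ w in Set.Ioo (0:ℝ) 1,
        projFun f (happrox u ε) w * projFun f (happrox v ε) w
        = ∫ w in Set.Ioo (0:ℝ) 1,
          (if f w = f u then 1 / (volume (levelSet f u)).toReal else 0)
            * (if f w = f v then 1 / (volume (levelSet f v)).toReal else 0) :=
      setIntegral_congr_fun measurableSet_Ioo
        (fun w hw => by rw [keyu ε hεu w hw, keyv ε hεv w hw])
    rw [hcongr]
    by_cases hfuv : f u = f v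
    · rw [if_pos hfuv]
      have hLv : levelSet f v = levelSet f u := levelSet_congr hfuv.symm
      set m := (volume (levelSet f u)).toReal with hm
      have h2 : ∫ w in Set.Ioo (0:ℝ) 1,
          (if f w = f u then 1 / m else 0) * (if f w = f v then 1 / m else 0)
          = ∫ w in Set.Ioo (0:ℝ) 1,
            (levelSet f u).indicator (fun _ => (1 / m) * (1 / m)) w := by
        refine setIntegral_congr_fun measurableSet_Ioo (fun w hw => ?_)
        by_cases hfw : f w = f u
        · rw [if_pos hfw, if_pos (hfw.trans hfuv),
            Set.indicator_of_mem (show w ∈ levelSet f u from ⟨hw, hfw⟩)]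
        · rw [if_neg hfw, zero_mul,
            Set.indicator_of_notMem (fun hmem' => hfw hmem'.2)]
      rw [hLv, h2]
      have hL := levelSet_measurable f hmono u
      rw [MeasureTheory.integral_indicator hL, Measure.restrict_restrict hL,
        MeasureTheory.setIntegral_const, smul_eq_mul,
        Set.inter_eq_left.2 (fun r hr => hr.1), Measure.real, ← hm]
      field_simp
    · rw [if_neg hfuv]
      have h2 : ∫ w in Set.Ioo (0:ℝ) 1,
          (if f w = f u then 1 / (volume (levelSet f u)).toReal else 0)
            * (if f w = f v then 1 / (volume (levelSet f v)).toReal else 0)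
          = ∫ w in Set.Ioo (0:ℝ) 1, (0:ℝ) := by
        refine setIntegral_congr_fun measurableSet_Ioo (fun w _ => ?_)
        by_cases hfw : f w = f u
        · rw [if_neg (fun h => hfuv (hfw.symm.trans h)), mul_zero]
        · rw [if_neg hfw, zero_mul]
      rw [h2, integral_zero]
  exact Tendsto.congr' (Filter.EventuallyEq.symm heq) tendsto_const_nhds
end
end

section
/- Let f : (0,1) → ℝ be a nondecreasing step function with finitely many values, and 0 ≤ u < v < 1. Then for every ε ∈ (0, v−u), 0 ≤ (pr_f h^u_ε, pr_f h^v_ε)_{L²} ≤ 1/(v−u−ε), where h^u_ε = ε⁻¹𝟙_{[u,u+ε)} and h^v_ε = ε⁻¹𝟙_{[v,v+ε)}. -/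
open MeasureTheory Set Filter

noncomputable section

/-- The normalized indicator kernel `h^u_ε = ε⁻¹ 𝟙_{[u,u+ε)}`. -/
def hker (u ε : ℝ) : ℝ → ℝ := fun w =>
  Set.indicator (Set.Ico u (u + ε)) (fun _ => 1 / ε) w

lemma levelSet_ordConnected (f : ℝ → ℝ) (hmono : MonotoneOn f (Set.Icc (0:ℝ) 1)) (w : ℝ) :
    (levelSet f w).OrdConnected := by
  constructor
  rintro x ⟨hx, hfx⟩ y ⟨hy, hfy⟩ z hz
  have hz1 : z ∈ Set.Ioo (0:ℝ) 1 := ⟨lt_of_lt_of_le hx.1 hz.1, lt_of_le_of_lt hz.2 hy.2⟩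
  refine ⟨hz1, le_antisymm ?_ ?_⟩
  · have := hmono (Set.Ioo_subset_Icc_self hz1) (Set.Ioo_subset_Icc_self hy) hz.2
    rwa [hfy] at this
  · have := hmono (Set.Ioo_subset_Icc_self hx) (Set.Ioo_subset_Icc_self hz1) hz.1
    rwa [hfx] at this

lemma levelSet_subset (f : ℝ → ℝ) (w : ℝ) : levelSet f w ⊆ Set.Ioo (0:ℝ) 1 :=
  fun _ hr => hr.1

lemma hker_nonneg (u ε : ℝ) (hε : 0 < ε) (w : ℝ) : 0 ≤ hker u ε w :=
  Set.indicator_nonneg (fun _ _ => by positivity) _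

lemma hker_mul_hker (u v ε : ℝ) (h : u + ε < v) (w : ℝ) : hker u ε w * hker v ε w = 0 := by
  by_cases hw : w ∈ Set.Ico v (v + ε)
  · have hw' : w ∉ Set.Ico u (u + ε) := fun hw' => absurd (lt_of_le_of_lt hw.1 hw'.2) (by linarith)
    simp [hker, Set.indicator_of_notMem hw']
  · simp [hker, Set.indicator_of_notMem hw]

lemma setIntegral_hker (u ε : ℝ) (S : Set ℝ) :
    ∫ r in S, hker u ε r = (volume (S ∩ Set.Ico u (u + ε))).toReal * (1 / ε) := by
  simp only [hker]
  rw [MeasureTheory.setIntegral_indicator measurableSet_Ico, MeasureTheory.setIntegral_const,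
    smul_eq_mul]
  rfl

lemma setIntegral_hker_nonneg (u ε : ℝ) (hε : 0 < ε) (S : Set ℝ) :
    0 ≤ ∫ r in S, hker u ε r :=
  integral_nonneg (fun r => hker_nonneg u ε hε r)

lemma setIntegral_hker_le_one (u ε : ℝ) (hε : 0 < ε) (S : Set ℝ) :
    ∫ r in S, hker u ε r ≤ 1 := by
  rw [setIntegral_hker]
  have h1 : volume (S ∩ Set.Ico u (u + ε)) ≤ ENNReal.ofReal ε := by
    calc volume (S ∩ Set.Ico u (u + ε)) ≤ volume (Set.Ico u (u + ε)) :=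
          measure_mono Set.inter_subset_right
      _ = ENNReal.ofReal ε := by rw [Real.volume_Ico]; ring_nf
  have h2 : (volume (S ∩ Set.Ico u (u + ε))).toReal ≤ ε := by
    have := ENNReal.toReal_mono ENNReal.ofReal_ne_top h1
    rwa [ENNReal.toReal_ofReal hε.le] at this
  calc (volume (S ∩ Set.Ico u (u + ε))).toReal * (1 / ε) ≤ ε * (1 / ε) := by
        apply mul_le_mul_of_nonneg_right h2; positivity
    _ = 1 := by field_simp

lemma setIntegral_hker_empty (u ε : ℝ) (S : Set ℝ) (h : S ∩ Set.Ico u (u + ε) = ∅) :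
    ∫ r in S, hker u ε r = 0 := by
  rw [setIntegral_hker, h]
  simp

lemma projFun_hker_nonneg (f : ℝ → ℝ) (u ε : ℝ) (hε : 0 < ε) (w : ℝ) :
    0 ≤ projFun f (hker u ε) w := by
  unfold projFun
  split_ifs
  · exact div_nonneg (setIntegral_hker_nonneg u ε hε _) ENNReal.toReal_nonneg
  · exact hker_nonneg u ε hε w

/-- for a nondecreasing step function `f` with finitely many values and
`0 ≤ u < v < 1`, for every `ε ∈ (0, v − u)`,
`0 ≤ (pr_f h^u_ε, pr_f h^v_ε)_{L²} ≤ 1/(v − u − ε)`. -/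
theorem stmt10 (f : ℝ → ℝ)
    (hmono : MonotoneOn f (Set.Icc (0:ℝ) 1))
    (hright : ∀ u ∈ Set.Ico (0:ℝ) 1, ContinuousWithinAt f (Set.Ici u) u)
    (hfin : (f '' Set.Icc (0:ℝ) 1).Finite)
    (u v : ℝ) (hu : 0 ≤ u) (huv : u < v) (hv : v < 1)
    (ε : ℝ) (hε : ε ∈ Set.Ioo 0 (v - u)) :
    0 ≤ ∫ w in Set.Ioo (0:ℝ) 1, projFun f (hker u ε) w * projFun f (hker v ε) w ∧
    (∫ w in Set.Ioo (0:ℝ) 1, projFun f (hker u ε) w * projFun f (hker v ε) w) ≤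
      1 / (v - u - ε) := by
  obtain ⟨hε0, hεv⟩ := hε
  have huεv : u + ε < v := by linarith
  set c : ℝ := (u + ε + v) / 2 with hc
  have hcu : u + ε < c := by rw [hc]; linarith
  have hcv : c < v := by rw [hc]; linarith
  have hcIoo : c ∈ Set.Ioo (0:ℝ) 1 := ⟨by linarith, by linarith⟩
  set S : Set ℝ := levelSet f c with hSdef
  have hSconn : S.OrdConnected := levelSet_ordConnected f hmono c
  have hS : MeasurableSet S := hSconn.measurableSet
  have hSsub : S ⊆ Set.Ioo (0:ℝ) 1 := levelSet_subset f c
  have hSfin : volume S ≠ ⊤ :=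
    (lt_of_le_of_lt (measure_mono hSsub) measure_Ioo_lt_top).ne
  set K : ℝ := projFun f (hker u ε) c * projFun f (hker v ε) c with hKdef
  -- pointwise identification with an indicator
  have key : Set.EqOn (fun w => projFun f (hker u ε) w * projFun f (hker v ε) w)
      (S.indicator (fun _ => K)) (Set.Ioo (0:ℝ) 1) := by
    intro w hw
    by_cases hwS : w ∈ S
    · rw [Set.indicator_of_mem hwS]
      have hfw : f w = f c := hwS.2
      have hlev : levelSet f w = S := by
        rw [hSdef]; unfold levelSet; rw [hfw]
      simp only
      by_cases hm : 0 < volume S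
      · rw [hKdef]
        unfold projFun
        rw [hlev, ← hSdef, if_pos hm, if_pos hm, if_pos hm, if_pos hm]
      · unfold projFun
        rw [hlev, if_neg hm, if_neg hm]
        rw [hKdef]
        unfold projFun
        rw [if_neg (by rw [← hSdef]; exact hm), if_neg (by rw [← hSdef]; exact hm)]
        rw [hker_mul_hker u v ε huεv w, hker_mul_hker u v ε huεv c]
    · rw [Set.indicator_of_notMem hwS]
      simp only
      set T : Set ℝ := levelSet f w with hTdef
      by_cases hm : 0 < volume T
      · unfold projFun
        rw [← hTdef, if_pos hm, if_pos hm]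
        by_contra hne
        have hIu : (∫ r in T, hker u ε r) ≠ 0 := by
          intro h; rw [h] at hne; simp at hne
        have hIv : (∫ r in T, hker v ε r) ≠ 0 := by
          intro h; rw [h] at hne; simp at hne
        have hau : (T ∩ Set.Ico u (u + ε)).Nonempty := by
          rw [Set.nonempty_iff_ne_empty]
          intro h; exact hIu (setIntegral_hker_empty u ε T h)
        have hbv : (T ∩ Set.Ico v (v + ε)).Nonempty := by
          rw [Set.nonempty_iff_ne_empty]
          intro h; exact hIv (setIntegral_hker_empty v ε T h)
        obtain ⟨a, haT, haI⟩ := hau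
        obtain ⟨b, hbT, hbI⟩ := hbv
        have hTconn : T.OrdConnected := levelSet_ordConnected f hmono w
        have hcT : c ∈ T := hTconn.out haT hbT ⟨by linarith [haI.2], by linarith [hbI.1]⟩
        exact hwS ⟨hw, hcT.2.symm⟩
      · unfold projFun
        rw [← hTdef, if_neg hm, if_neg hm]
        exact hker_mul_hker u v ε huεv w
  have hint : (∫ w in Set.Ioo (0:ℝ) 1, projFun f (hker u ε) w * projFun f (hker v ε) w)
      = (volume S).toReal * K := by
    rw [MeasureTheory.setIntegral_congr_fun measurableSet_Ioo key,
      MeasureTheory.setIntegral_indicator hS, MeasureTheory.setIntegral_const,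
      Set.inter_eq_self_of_subset_right hSsub, smul_eq_mul]
    rfl
  have hK0 : 0 ≤ K :=
    mul_nonneg (projFun_hker_nonneg f u ε hε0 c) (projFun_hker_nonneg f v ε hε0 c)
  have hvuε : (0:ℝ) < v - u - ε := by linarith
  rw [hint]
  constructor
  · exact mul_nonneg ENNReal.toReal_nonneg hK0
  · rcases hK0.eq_or_lt with hK | hK
    · rw [← hK, mul_zero]; positivity
    · -- K > 0 : both factors positive
      have hne1 : projFun f (hker u ε) c ≠ 0 := by
        intro h; rw [hKdef, h, zero_mul] at hK; exact lt_irrefl _ hK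
      have hne2 : projFun f (hker v ε) c ≠ 0 := by
        intro h; rw [hKdef, h, mul_zero] at hK; exact lt_irrefl _ hK
      have hm : 0 < volume S := by
        by_contra hm
        apply hne1
        unfold projFun
        rw [if_neg (by rw [← hSdef]; exact hm)]
        have : c ∉ Set.Ico u (u + ε) := fun hc' => absurd hc'.2 (by push_neg; linarith)
        simp [hker, Set.indicator_of_notMem this]
      have hmpos : 0 < (volume S).toReal := ENNReal.toReal_pos hm.ne' hSfin
      have hproj1 : projFun f (hker u ε) c = (∫ r in S, hker u ε r) / (volume S).toReal := by
        unfold projFun; rw [if_pos (by rw [← hSdef]; exact hm)]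
      have hproj2 : projFun f (hker v ε) c = (∫ r in S, hker v ε r) / (volume S).toReal := by
        unfold projFun; rw [if_pos (by rw [← hSdef]; exact hm)]
      have hIu : (∫ r in S, hker u ε r) ≠ 0 := by
        intro h; apply hne1; rw [hproj1, h, zero_div]
      have hIv : (∫ r in S, hker v ε r) ≠ 0 := by
        intro h; apply hne2; rw [hproj2, h, zero_div]
      have hau : (S ∩ Set.Ico u (u + ε)).Nonempty := by
        rw [Set.nonempty_iff_ne_empty]
        intro h; exact hIu (setIntegral_hker_empty u ε S h)
      have hbv : (S ∩ Set.Ico v (v + ε)).Nonempty := by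
        rw [Set.nonempty_iff_ne_empty]
        intro h; exact hIv (setIntegral_hker_empty v ε S h)
      obtain ⟨a, haS, haI⟩ := hau
      obtain ⟨b, hbS, hbI⟩ := hbv
      have hIcc : Set.Icc a b ⊆ S := hSconn.out haS hbS
      have hvol : ENNReal.ofReal (b - a) ≤ volume S := by
        calc ENNReal.ofReal (b - a) = volume (Set.Icc a b) := (Real.volume_Icc).symm
          _ ≤ volume S := measure_mono hIcc
      have hmge : v - u - ε ≤ (volume S).toReal := by
        have h1 := ENNReal.toReal_mono hSfin hvol
        rw [ENNReal.toReal_ofReal (by linarith [haI.2, hbI.1] : (0:ℝ) ≤ b - a)] at h1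
        linarith [haI.2, hbI.1]
      -- now compute
      rw [hKdef, hproj1, hproj2]
      have hIu1 : (∫ r in S, hker u ε r) ≤ 1 := setIntegral_hker_le_one u ε hε0 S
      have hIv1 : (∫ r in S, hker v ε r) ≤ 1 := setIntegral_hker_le_one v ε hε0 S
      have hIu0 : 0 ≤ (∫ r in S, hker u ε r) := setIntegral_hker_nonneg u ε hε0 S
      have hIv0 : 0 ≤ (∫ r in S, hker v ε r) := setIntegral_hker_nonneg v ε hε0 S
      set m := (volume S).toReal
      calc m * ((∫ r in S, hker u ε r) / m * ((∫ r in S, hker v ε r) / m))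
          = (∫ r in S, hker u ε r) * (∫ r in S, hker v ε r) / m := by
            field_simp
        _ ≤ 1 / m := by
            gcongr
            exact mul_le_one₀ hIu1 hIv0 hIv1
        _ ≤ 1 / (v - u - ε) := one_div_le_one_div_of_le hvuε hmge
end
end

section
/- Let f, f_n ∈ C([0,T], L₂↑) with projections P_t = pr_{f_t} and Pⁿ_t = pr_{fⁿ_t}. Assume: (a) Pⁿ → P^∞ weakly in L²([0,T], HS(L²)); (b) for almost every t ∈ [0,T] and all h ∈ L², ‖P_t h‖ ≤ liminf_n ‖Pⁿ_t h‖; (c) for every h ∈ L² and almost all t, P^∞_t(P_t h) = P^∞_t h. Then P^∞ = P in L²([0,T], HS(L²)). -/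
open MeasureTheory Set Filter
open scoped ENNReal NNReal

set_option maxHeartbeats 1000000
set_option synthInstance.maxHeartbeats 400000

noncomputable section

/-- Lebesgue measure restricted to `(0,1)`. -/
def mu01 : Measure ℝ := volume.restrict (Set.Ioo (0:ℝ) 1)

/-- The Hilbert space `L² = L²((0,1), Lebesgue)`. -/
abbrev H := Lp ℝ 2 mu01

/-- The closed subspace `L₂(g)` of (a.e.) `σ(g)`-measurable functions in `L²`. -/
abbrev Lg (g : ℝ → ℝ) : Submodule ℝ H :=
  lpMeas ℝ ℝ (MeasurableSpace.comap g Real.measurableSpace) 2 mu01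

/-- The orthogonal projection `pr_g` of `L²` onto `L₂(g)`, as an operator on `L²`. -/
def projOp (g : ℝ → ℝ) (hg : Measurable g) : H →L[ℝ] H :=
  haveI : Fact (MeasurableSpace.comap g Real.measurableSpace ≤ Real.measurableSpace) :=
    ⟨hg.comap_le⟩
  (Lg g).subtypeL.comp (Lg g).orthogonalProjectionOnto

instance : IsFiniteMeasure mu01 := by
  constructor
  rw [mu01, Measure.restrict_apply_univ]
  simp [Real.volume_Ioo]

namespace Stmt17

local notation "⟪" x ", " y "⟫" => @inner ℝ _ _ x y

lemma projOp_mem (g : ℝ → ℝ) (hg : Measurable g) (h : H) : projOp g hg h ∈ Lg g := by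
  haveI : Fact (MeasurableSpace.comap g Real.measurableSpace ≤ Real.measurableSpace) :=
    ⟨hg.comap_le⟩
  exact ((Lg g).orthogonalProjectionOnto h).2

lemma inner_projOp (g : ℝ → ℝ) (hg : Measurable g) (h : H) {φ : H} (hφ : φ ∈ Lg g) :
    ⟪projOp g hg h, φ⟫ = ⟪h, φ⟫ := by
  haveI : Fact (MeasurableSpace.comap g Real.measurableSpace ≤ Real.measurableSpace) :=
    ⟨hg.comap_le⟩
  have h0 : h - ↑((Lg g).orthogonalProjectionOnto h) ∈ (Lg g)ᗮ :=
    Submodule.sub_starProjection_mem_orthogonal h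
  have h1 : ⟪φ, h - projOp g hg h⟫ = (0:ℝ) :=
    (Submodule.mem_orthogonal (Lg g) _).1 h0 φ hφ
  have h2 : ⟪φ, h⟫ - ⟪φ, projOp g hg h⟫ = (0:ℝ) := by
    simpa [inner_sub_right] using h1
  have h3 := real_inner_comm φ h
  have h4 := real_inner_comm φ (projOp g hg h)
  linarith

lemma norm_projOp_le (g : ℝ → ℝ) (hg : Measurable g) (h : H) :
    ‖projOp g hg h‖ ≤ ‖h‖ := by
  have h1 : ⟪projOp g hg h, projOp g hg h⟫ = ⟪h, projOp g hg h⟫ :=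
    inner_projOp g hg h (projOp_mem g hg h)
  have h2 : ‖projOp g hg h‖ ^ 2 ≤ ‖h‖ * ‖projOp g hg h‖ := by
    rw [← real_inner_self_eq_norm_sq, h1]
    exact real_inner_le_norm h _
  nlinarith [norm_nonneg (projOp g hg h), norm_nonneg h]

lemma projOp_eq_self (g : ℝ → ℝ) (hg : Measurable g) {x : H} (hx : x ∈ Lg g) :
    projOp g hg x = x := by
  haveI : Fact (MeasurableSpace.comap g Real.measurableSpace ≤ Real.measurableSpace) :=
    ⟨hg.comap_le⟩
  have h1 := Submodule.orthogonalProjectionOnto_mem_subspace_eq_self (K := Lg g) ⟨x, hx⟩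
  exact congrArg Subtype.val h1

lemma projOp_idem (g : ℝ → ℝ) (hg : Measurable g) (h : H) :
    projOp g hg (projOp g hg h) = projOp g hg h :=
  projOp_eq_self g hg (projOp_mem g hg h)

lemma inner_projOp_self (g : ℝ → ℝ) (hg : Measurable g) (h : H) :
    ⟪projOp g hg h, h⟫ = ‖projOp g hg h‖ ^ 2 := by
  have h1 : ⟪projOp g hg h, projOp g hg h⟫ = ⟪h, projOp g hg h⟫ :=
    inner_projOp g hg h (projOp_mem g hg h)
  rw [real_inner_comm, ← h1, real_inner_self_eq_norm_sq]

lemma measurable_comap (g : ℝ → ℝ) :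
    @Measurable ℝ ℝ (MeasurableSpace.comap g Real.measurableSpace) Real.measurableSpace g :=
  Measurable.of_comap_le le_rfl

lemma toLp_comp_mem_Lg {g v : ℝ → ℝ} (hg : Measurable g) (hv : Measurable v)
    (hm : MemLp (v ∘ g) 2 mu01) : hm.toLp (v ∘ g) ∈ Lg g :=
  mem_lpMeas_iff_aestronglyMeasurable.2
    ⟨v ∘ g, (hv.comp (measurable_comap g)).stronglyMeasurable, hm.coeFn_toLp⟩

lemma memLp_bcf_comp (v : BoundedContinuousFunction ℝ ℝ) {g : ℝ → ℝ} (hg : Measurable g) :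
    MemLp (⇑v ∘ g) 2 mu01 :=
  MemLp.of_bound ((v.continuous.measurable.comp hg).aestronglyMeasurable) ‖v‖
    (ae_of_all _ fun x => v.norm_coe_le_norm _)

lemma exists_factor {γ : Type*} {mγ : MeasurableSpace γ} {g : ℝ → γ} {s : ℝ → ℝ}
    (hfin : (Set.range s).Finite)
    (hfib : ∀ c : ℝ, ∃ B : Set γ, MeasurableSet B ∧ g ⁻¹' B = s ⁻¹' {c}) :
    ∃ vs : γ → ℝ, Measurable vs ∧ ∀ x, vs (g x) = s x := by
  classical
  choose B hBmeas hBpre using hfib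
  refine ⟨fun y => ∑ c ∈ hfin.toFinset, (B c).indicator (fun _ => c) y,
    Finset.measurable_sum _ fun c _ => measurable_const.indicator (hBmeas c), fun x => ?_⟩
  show (∑ c ∈ hfin.toFinset, (B c).indicator (fun _ => c) (g x)) = s x
  rw [Finset.sum_eq_single_of_mem (s x) (hfin.mem_toFinset.2 (Set.mem_range_self x))]
  · have hx : g x ∈ B (s x) := by
      have hx1 : x ∈ g ⁻¹' B (s x) := by
        rw [hBpre]; exact rfl
      exact hx1
    simp [Set.indicator_of_mem hx]
  · intro c hc hne
    have hx : g x ∉ B c := by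
      intro hmem
      have hx2 : x ∈ s ⁻¹' {c} := by rw [← hBpre]; exact hmem
      have hsx : s x = c := hx2
      exact hne hsx.symm
    simp [Set.indicator_of_notMem hx]

lemma exists_bcf_approx (g : ℝ → ℝ) (hg : Measurable g) (φ : H) (hφ : φ ∈ Lg g)
    {ε : ℝ≥0∞} (hε : ε ≠ 0) :
    ∃ v : BoundedContinuousFunction ℝ ℝ, eLpNorm (⇑v ∘ g - ⇑φ) 2 mu01 ≤ ε := by
  classical
  have hle : MeasurableSpace.comap g Real.measurableSpace ≤ Real.measurableSpace := hg.comap_le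
  obtain ⟨f₀, hf₀m, hf₀eq⟩ := mem_lpMeas_iff_aestronglyMeasurable.1 hφ
  have hδ : ε / 2 ≠ 0 := by
    simp [ENNReal.div_eq_zero_iff, hε]
  have hφ2 : MemLp f₀ 2 mu01 := (Lp.memLp φ).ae_eq hf₀eq
  have hf₀trim : MemLp f₀ 2 (mu01.trim hle) := by
    refine ⟨⟨f₀, hf₀m, Filter.EventuallyEq.rfl⟩, ?_⟩
    rw [eLpNorm_trim hle hf₀m]
    exact hφ2.2
  obtain ⟨s, hs_lt, hs_mem⟩ :=
    @MemLp.exists_simpleFunc_eLpNorm_sub_lt ℝ (MeasurableSpace.comap g Real.measurableSpace) 2 ℝ _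
      f₀ (mu01.trim hle) hf₀trim (by norm_num) _ hδ
  have hsm : @StronglyMeasurable ℝ ℝ _ (MeasurableSpace.comap g Real.measurableSpace) ⇑s :=
    @SimpleFunc.stronglyMeasurable ℝ ℝ (MeasurableSpace.comap g Real.measurableSpace) _ s
  have hs_mu : eLpNorm (f₀ - ⇑s) 2 mu01 < ε / 2 := by
    rwa [eLpNorm_trim hle (hf₀m.sub hsm)] at hs_lt
  have hfin : (Set.range ⇑s).Finite :=
    @SimpleFunc.finite_range ℝ ℝ (MeasurableSpace.comap g Real.measurableSpace) s
  have hfiber : ∀ c : ℝ, ∃ B : Set ℝ, MeasurableSet B ∧ g ⁻¹' B = ⇑s ⁻¹' {c} := fun c =>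
    MeasurableSpace.measurableSet_comap.1
      (@SimpleFunc.measurableSet_fiber ℝ ℝ (MeasurableSpace.comap g Real.measurableSpace) s c)
  obtain ⟨vs, hvs_meas, hvs_comp⟩ := exists_factor hfin hfiber
  have hvs_eq : vs ∘ g = ⇑s := funext hvs_comp
  have hs_mu_mem : MemLp (⇑s) 2 mu01 := memLp_of_memLp_trim hle hs_mem
  haveI : IsFiniteMeasure (mu01.map g) := mu01.isFiniteMeasure_map g
  have hvs_ν : MemLp vs 2 (mu01.map g) := by
    refine ⟨hvs_meas.aestronglyMeasurable, ?_⟩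
    rw [eLpNorm_map_measure hvs_meas.aestronglyMeasurable hg.aemeasurable, hvs_eq]
    exact hs_mu_mem.2
  obtain ⟨v, hv_le, hv_mem⟩ := hvs_ν.exists_boundedContinuous_eLpNorm_sub_le (by norm_num) hδ
  refine ⟨v, ?_⟩
  have hvg : eLpNorm (vs ∘ g - ⇑v ∘ g) 2 mu01 ≤ ε / 2 := by
    have heq : eLpNorm (vs ∘ g - ⇑v ∘ g) 2 mu01 = eLpNorm (vs - ⇑v) 2 (mu01.map g) := by
      rw [eLpNorm_map_measure
        (show AEStronglyMeasurable (vs - ⇑v) (mu01.map g) from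
          (hvs_meas.sub v.continuous.measurable).aestronglyMeasurable) hg.aemeasurable]
      rfl
    rw [heq]
    exact hv_le
  have hasm_vg : AEStronglyMeasurable (⇑v ∘ g) mu01 :=
    (v.continuous.measurable.comp hg).aestronglyMeasurable
  have hasm_s : AEStronglyMeasurable (⇑s) mu01 := (hsm.mono hle).aestronglyMeasurable
  have hasm_f₀ : AEStronglyMeasurable f₀ mu01 := (hf₀m.mono hle).aestronglyMeasurable
  have h1 : eLpNorm (⇑v ∘ g - f₀) 2 mu01 ≤ ε / 2 + ε / 2 := by
    have htri : eLpNorm ((⇑v ∘ g - ⇑s) + (⇑s - f₀)) 2 mu01 ≤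
        eLpNorm (⇑v ∘ g - ⇑s) 2 mu01 + eLpNorm (⇑s - f₀) 2 mu01 :=
      eLpNorm_add_le (hasm_vg.sub hasm_s) (hasm_s.sub hasm_f₀) one_le_two
    rw [sub_add_sub_cancel] at htri
    refine htri.trans (add_le_add ?_ ?_)
    · have heq2 : ⇑v ∘ g - ⇑s = -(vs ∘ g - ⇑v ∘ g) := by rw [hvs_eq]; ring
      rw [heq2, eLpNorm_neg]
      exact hvg
    · have heq3 : ⇑s - f₀ = -(f₀ - ⇑s) := by ring
      rw [heq3, eLpNorm_neg]
      exact hs_mu.le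
  have h2 : eLpNorm (⇑v ∘ g - ⇑φ) 2 mu01 = eLpNorm (⇑v ∘ g - f₀) 2 mu01 :=
    eLpNorm_congr_ae (EventuallyEq.sub (EventuallyEq.rfl) hf₀eq)
  rw [h2]
  exact h1.trans (by rw [ENNReal.add_halves])

end Stmt17

section PartC
namespace Stmt17
open BoundedContinuousFunction

lemma tendsto_eLpNorm_comp_of_tendsto (v : BoundedContinuousFunction ℝ ℝ)
    {gk : ℕ → ℝ → ℝ} {g0 : ℝ → ℝ} (hgk : ∀ k, Measurable (gk k)) (hg0 : Measurable g0)
    (hconv : Tendsto (fun k => eLpNorm (fun u => gk k u - g0 u) 2 mu01) atTop (nhds 0)) :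
    Tendsto (fun k => eLpNorm (⇑v ∘ gk k - ⇑v ∘ g0) 2 mu01) atTop (nhds 0) := by
  apply tendsto_of_subseq_tendsto
  intro ns hns
  have h1 : Tendsto (fun n => eLpNorm (fun u => gk (ns n) u - g0 u) 2 mu01) atTop (nhds 0) :=
    hconv.comp hns
  have h2 : TendstoInMeasure mu01 (fun n => gk (ns n)) atTop g0 := by
    refine tendstoInMeasure_of_tendsto_eLpNorm (p := 2) two_ne_zero
      (fun n => (hgk (ns n)).aestronglyMeasurable) hg0.aestronglyMeasurable ?_
    exact h1
  obtain ⟨ms, _hms, hae⟩ := h2.exists_seq_tendsto_ae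
  refine ⟨ms, ?_⟩
  -- bounded convergence for the lintegrals
  set F : ℕ → ℝ → ℝ≥0∞ :=
    fun j x => ((‖v (gk (ns (ms j)) x) - v (g0 x)‖₊ : ℝ≥0∞)) ^ (2:ℕ) with hFdef
  have hFm : ∀ j, Measurable (F j) := by
    intro j
    exact ((((v.continuous.measurable.comp (hgk (ns (ms j)))).sub
      (v.continuous.measurable.comp hg0))).enorm).pow_const 2
  have hFbound : ∀ j, ∀ᵐ x ∂mu01, F j x ≤ (ENNReal.ofReal (2 * ‖v‖)) ^ (2:ℕ) := by
    intro j
    refine ae_of_all _ fun x => ?_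
    have hb : ‖v (gk (ns (ms j)) x) - v (g0 x)‖ ≤ 2 * ‖v‖ := by
      rw [← dist_eq_norm]
      exact v.dist_le_two_norm _ _
    have : (‖v (gk (ns (ms j)) x) - v (g0 x)‖₊ : ℝ≥0∞) ≤ ENNReal.ofReal (2 * ‖v‖) := by
      rw [← enorm_eq_nnnorm, ← ofReal_norm]
      exact ENNReal.ofReal_le_ofReal hb
    exact pow_le_pow_left' this 2
  have hFlim : ∀ᵐ x ∂mu01, Tendsto (fun j => F j x) atTop (nhds 0) := by
    filter_upwards [hae] with x hx
    have h3 : Tendsto (fun j => v (gk (ns (ms j)) x)) atTop (nhds (v (g0 x))) :=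
      (v.continuous.tendsto _).comp hx
    have h4 : Tendsto (fun j => v (gk (ns (ms j)) x) - v (g0 x)) atTop (nhds 0) := by
      simpa using h3.sub_const (v (g0 x))
    have h5 : Tendsto (fun j => (‖v (gk (ns (ms j)) x) - v (g0 x)‖₊ : ℝ≥0∞)) atTop (nhds 0) := by
      rw [← ENNReal.coe_zero]
      exact ENNReal.tendsto_coe.2 (by simpa using h4.nnnorm)
    simpa using ENNReal.Tendsto.pow (n := 2) h5
  have hL : Tendsto (fun j => ∫⁻ x, F j x ∂mu01) atTop (nhds 0) := by
    have := tendsto_lintegral_of_dominated_convergence (F := fun j x => F j x)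
      (f := fun _ => (0:ℝ≥0∞)) (bound := fun _ => (ENNReal.ofReal (2 * ‖v‖)) ^ (2:ℕ))
      hFm hFbound (by rw [lintegral_const]; exact ENNReal.mul_ne_top (ENNReal.pow_ne_top ENNReal.ofReal_ne_top) (measure_ne_top _ _)) hFlim
    simpa using this
  -- identify eLpNorm with lintegral
  have hrw : ∀ j, eLpNorm (⇑v ∘ gk (ns (ms j)) - ⇑v ∘ g0) 2 mu01
      = (∫⁻ x, F j x ∂mu01) ^ (1/2 : ℝ) := by
    intro j
    rw [eLpNorm_eq_lintegral_rpow_enorm_toReal two_ne_zero ENNReal.ofNat_ne_top]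
    simp only [ENNReal.toReal_ofNat]
    congr 1
    apply lintegral_congr
    intro x
    rw [hFdef]
    simp only [Pi.sub_apply, Function.comp_apply]
    rw [← ENNReal.rpow_natCast]
    norm_num
    rfl
  simp only [hrw]
  have hcont : Tendsto (fun y : ℝ≥0∞ => y ^ (1/2 : ℝ)) (nhds 0) (nhds ((0:ℝ≥0∞) ^ (1/2:ℝ))) :=
    (ENNReal.continuous_rpow_const).tendsto 0
  have : Tendsto (fun j => (∫⁻ x, F j x ∂mu01) ^ (1/2 : ℝ)) atTop (nhds ((0:ℝ≥0∞) ^ (1/2:ℝ))) :=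
    hcont.comp hL
  simpa [ENNReal.zero_rpow_of_pos] using this

lemma eventually_lt_norm_projOp {gk : ℕ → ℝ → ℝ} {g0 : ℝ → ℝ}
    (hgk : ∀ k, Measurable (gk k)) (hg0 : Measurable g0)
    (hconv : Tendsto (fun k => eLpNorm (fun u => gk k u - g0 u) 2 mu01) atTop (nhds 0))
    (h : H) {c : ℝ} (hc : c < ‖projOp g0 hg0 h‖) :
    ∀ᶠ k in atTop, c < ‖projOp (gk k) (hgk k) h‖ := by
  rcases lt_or_ge c 0 with hc0 | hc0
  · exact Eventually.of_forall fun k => lt_of_lt_of_le hc0 (norm_nonneg _)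
  set φ : H := projOp g0 hg0 h with hφdef
  set N : ℝ := ‖φ‖ with hNdef
  have hN : 0 < N := lt_of_le_of_lt hc0 hc
  set M : ℝ := N^2 - c*N with hMdef
  have hMpos : 0 < M := by nlinarith
  set ε : ℝ := M / (2*(N + c + 2)) with hεdef
  have hden : 0 < 2*(N + c + 2) := by nlinarith
  have hεpos : 0 < ε := div_pos hMpos hden
  have hεval : ε * (2*(N + c + 2)) = M := div_mul_cancel₀ M hden.ne'
  obtain ⟨v, hv⟩ := exists_bcf_approx g0 hg0 φ (projOp_mem g0 hg0 h)
      (ε := ENNReal.ofReal ε) (by simp [hεpos])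
  set Φ0 : H := (memLp_bcf_comp v hg0).toLp (⇑v ∘ g0) with hΦ0def
  have hΦ0mem : Φ0 ∈ Lg g0 := toLp_comp_mem_Lg hg0 v.continuous.measurable _
  have hΦ0close : ‖Φ0 - φ‖ ≤ ε := by
    have h1 : (⇑(Φ0 - φ) : ℝ → ℝ) =ᵐ[mu01] (⇑v ∘ g0 - ⇑φ) := by
      filter_upwards [Lp.coeFn_sub Φ0 φ, (memLp_bcf_comp v hg0).coeFn_toLp] with x hx1 hx2
      simp only [hx1, Pi.sub_apply, hx2]
      rw [← hx2]
    rw [Lp.norm_def, eLpNorm_congr_ae h1]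
    exact ENNReal.toReal_le_of_le_ofReal hεpos.le hv
  set Φ : ℕ → H := fun k => (memLp_bcf_comp v (hgk k)).toLp (⇑v ∘ gk k) with hΦdef
  have hΦmem : ∀ k, Φ k ∈ Lg (gk k) := fun k => toLp_comp_mem_Lg (hgk k) v.continuous.measurable _
  have hΦtend : Tendsto Φ atTop (nhds Φ0) := by
    rw [tendsto_iff_norm_sub_tendsto_zero]
    have h2 := tendsto_eLpNorm_comp_of_tendsto v hgk hg0 hconv
    have h3 : ∀ k, ‖Φ k - Φ0‖ = (eLpNorm (⇑v ∘ gk k - ⇑v ∘ g0) 2 mu01).toReal := by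
      intro k
      rw [Lp.norm_def]
      apply congrArg
      apply eLpNorm_congr_ae
      filter_upwards [Lp.coeFn_sub (Φ k) Φ0, (memLp_bcf_comp v (hgk k)).coeFn_toLp,
        (memLp_bcf_comp v hg0).coeFn_toLp] with x hx1 hx2 hx3
      simp only [hx1, Pi.sub_apply, hx2, hx3]
      rw [← hx2, ← hx3]
    simp only [h3]
    have := (ENNReal.tendsto_toReal (ENNReal.zero_ne_top)).comp h2
    simpa [Function.comp_def] using this
  have hiΦ : Tendsto (fun k => (inner ℝ h (Φ k) : ℝ)) atTop (nhds (inner ℝ h Φ0 : ℝ)) :=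
    Tendsto.inner tendsto_const_nhds hΦtend
  have hnΦ : Tendsto (fun k => ‖Φ k‖) atTop (nhds ‖Φ0‖) := hΦtend.norm
  have key0 : (inner ℝ h Φ0 : ℝ) ≥ N^2 - N*ε := by
    have e1 : (inner ℝ φ Φ0 : ℝ) = inner ℝ h Φ0 := inner_projOp g0 hg0 h hΦ0mem
    have e2 : (inner ℝ φ (Φ0 - φ) : ℝ) = inner ℝ φ Φ0 - inner ℝ φ φ := inner_sub_right φ Φ0 φ
    have e3 : |(inner ℝ φ (Φ0 - φ) : ℝ)| ≤ N * ε := by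
      refine (abs_real_inner_le_norm _ _).trans ?_
      exact mul_le_mul le_rfl hΦ0close (norm_nonneg _) hN.le
    have e4 : (inner ℝ φ φ : ℝ) = N^2 := real_inner_self_eq_norm_sq φ
    have e5 : (inner ℝ φ (Φ0 - φ) : ℝ) ≥ -(N*ε) := by
      rcases abs_le.1 e3 with ⟨hl, _⟩; linarith
    linarith [e1, e2, e4, e5]
  have keyN : ‖Φ0‖ ≤ N + ε := by
    have : Φ0 = φ + (Φ0 - φ) := by abel
    calc ‖Φ0‖ = ‖φ + (Φ0 - φ)‖ := by rw [← this]
    _ ≤ ‖φ‖ + ‖Φ0 - φ‖ := norm_add_le _ _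
    _ ≤ N + ε := by rw [← hNdef]; linarith [hΦ0close]
  have hev1 : ∀ᶠ k in atTop, (inner ℝ h (Φ k) : ℝ) > (inner ℝ h Φ0 : ℝ) - ε :=
    hiΦ.eventually (eventually_gt_nhds (by linarith))
  have hev2 : ∀ᶠ k in atTop, ‖Φ k‖ < ‖Φ0‖ + ε :=
    hnΦ.eventually (eventually_lt_nhds (by linarith))
  filter_upwards [hev1, hev2] with k h1 h2
  have h4 : (inner ℝ h (Φ k) : ℝ) ≤ ‖projOp (gk k) (hgk k) h‖ * ‖Φ k‖ := by
    rw [← inner_projOp (gk k) (hgk k) h (hΦmem k)]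
    exact real_inner_le_norm _ _
  by_contra hcon
  push_neg at hcon
  have h5 : ‖projOp (gk k) (hgk k) h‖ * ‖Φ k‖ ≤ c * ‖Φ k‖ :=
    mul_le_mul_of_nonneg_right hcon (norm_nonneg _)
  have h6 : ‖Φ k‖ ≤ N + 2*ε := by linarith [h2, keyN]
  have h7 : c * ‖Φ k‖ ≤ c * (N + 2*ε) := mul_le_mul_of_nonneg_left h6 hc0
  have h8 : (inner ℝ h (Φ k) : ℝ) > N^2 - N*ε - ε := by linarith [key0, h1]
  nlinarith [hεval, hMpos, hεpos, hc0, hN]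

lemma aemeasurable_norm_projOp (T : ℝ) {g : ℝ → ℝ → ℝ} (hgm : ∀ t, Measurable (g t))
    (hgcont : ∀ t₀ ∈ Set.Icc (0:ℝ) T,
      Tendsto (fun t => eLpNorm (fun u => g t u - g t₀ u) 2 mu01)
        (nhdsWithin t₀ (Set.Icc (0:ℝ) T)) (nhds 0)) (h : H) :
    AEMeasurable (fun t => ‖projOp (g t) (hgm t) h‖) (volume.restrict (Set.Icc (0:ℝ) T)) := by
  set F := fun t => ‖projOp (g t) (hgm t) h‖ with hF
  have hlsc : ∀ t₀ ∈ Set.Icc (0:ℝ) T, ∀ c : ℝ, c < F t₀ →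
      ∀ᶠ t in nhdsWithin t₀ (Set.Icc (0:ℝ) T), c < F t := by
    intro t₀ ht₀ c hc
    by_contra hcon
    rw [Filter.not_eventually] at hcon
    obtain ⟨u, hu, hcu⟩ := Filter.exists_seq_forall_of_frequently hcon
    have hconv : Tendsto (fun k => eLpNorm (fun x => g (u k) x - g t₀ x) 2 mu01) atTop (nhds 0) :=
      (hgcont t₀ ht₀).comp hu
    obtain ⟨k, hk⟩ := (eventually_lt_norm_projOp (fun k => hgm (u k)) (hgm t₀) hconv h hc).exists
    exact hcu k hk
  have hopen : ∀ a : ℝ, ∃ U : Set ℝ, IsOpen U ∧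
      {t | t ∈ Set.Icc (0:ℝ) T ∧ a < F t} = U ∩ Set.Icc (0:ℝ) T := by
    intro a
    have hV : ∀ t₀ ∈ {t | t ∈ Set.Icc (0:ℝ) T ∧ a < F t}, ∃ V : Set ℝ, IsOpen V ∧ t₀ ∈ V ∧
        ∀ x ∈ V ∩ Set.Icc (0:ℝ) T, a < F x := by
      intro t₀ ht₀
      have h1 := hlsc t₀ ht₀.1 a ht₀.2
      rw [eventually_nhdsWithin_iff] at h1
      obtain ⟨V, hVsub, hVopen, hVmem⟩ := eventually_nhds_iff.1 h1
      exact ⟨V, hVopen, hVmem, fun x hx => hVsub x hx.1 hx.2⟩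
    choose! V hVopen hVmem hVsub using hV
    refine ⟨⋃ t₀ ∈ {t | t ∈ Set.Icc (0:ℝ) T ∧ a < F t}, V t₀,
      isOpen_biUnion (fun t₀ ht₀ => hVopen t₀ ht₀), ?_⟩
    ext t
    constructor
    · intro ht
      exact ⟨Set.mem_biUnion ht (hVmem t ht), ht.1⟩
    · rintro ⟨htU, htI⟩
      obtain ⟨t₀, ht₀, htV⟩ := Set.mem_iUnion₂.1 htU
      exact ⟨htI, hVsub t₀ ht₀ t ⟨htV, htI⟩⟩
  choose U hUopen hUeq using hopen
  have hmeas : Measurable ((Set.Icc (0:ℝ) T).indicator F) := by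
    apply measurable_of_Ioi
    intro a
    by_cases ha : 0 ≤ a
    · have heq : (Set.Icc (0:ℝ) T).indicator F ⁻¹' (Set.Ioi a) = U a ∩ Set.Icc (0:ℝ) T := by
        rw [← hUeq a]
        ext t
        by_cases htI : t ∈ Set.Icc (0:ℝ) T
        · simp only [Set.mem_preimage, Set.indicator_of_mem htI, Set.mem_Ioi, Set.mem_setOf_eq]
          constructor
          · intro hx; exact ⟨htI, hx⟩
          · rintro ⟨-, hx⟩; exact hx
        · simp only [Set.mem_preimage, Set.indicator_of_notMem htI, Set.mem_Ioi,
            Set.mem_setOf_eq, htI, false_and, iff_false]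
          linarith
      rw [heq]
      exact ((hUopen a).measurableSet).inter measurableSet_Icc
    · push_neg at ha
      have heq : (Set.Icc (0:ℝ) T).indicator F ⁻¹' (Set.Ioi a)
          = (U a ∩ Set.Icc (0:ℝ) T) ∪ (Set.Icc (0:ℝ) T)ᶜ := by
        rw [← hUeq a]
        ext t
        by_cases htI : t ∈ Set.Icc (0:ℝ) T
        · simp only [Set.mem_preimage, Set.indicator_of_mem htI, Set.mem_Ioi, Set.mem_union,
            Set.mem_setOf_eq, Set.mem_compl_iff]
          constructor
          · intro hx; exact Or.inl ⟨htI, hx⟩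
          · rintro (⟨-, hx⟩ | hnot)
            · exact hx
            · exact absurd htI hnot
        · simp only [Set.mem_preimage, Set.indicator_of_notMem htI, Set.mem_Ioi, Set.mem_union,
            Set.mem_setOf_eq, htI, false_and, Set.mem_compl_iff, not_false_iff, or_true, iff_true]
          linarith
      rw [heq]
      exact (((hUopen a).measurableSet).inter measurableSet_Icc).union
        measurableSet_Icc.compl
  refine (hmeas.aemeasurable).congr ?_
  filter_upwards [ae_restrict_mem measurableSet_Icc] with t ht
  exact Set.indicator_of_mem ht F

end Stmt17
end PartC

section PartD
namespace Stmt17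

variable {e : HilbertBasis ℕ ℝ H} {Q : ℝ → H →L[ℝ] H}

/-- Expansion of `Q t x` in the basis. -/
lemma hasSum_Q_apply (e : HilbertBasis ℕ ℝ H) (Q : ℝ → H →L[ℝ] H) (t : ℝ) (x : H) :
    HasSum (fun i => (inner ℝ (e i) x : ℝ) • (Q t (e i))) (Q t x) := by
  have h1 := (e.hasSum_repr x).mapL (Q t)
  have h2 : ∀ i, Q t ((e.repr x i) • e i) = (inner ℝ (e i) x : ℝ) • Q t (e i) := by
    intro i
    rw [_root_.map_smul, e.repr_apply_apply]
  simpa [h2] using h1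

lemma hasSum_inner_Q (e : HilbertBasis ℕ ℝ H) (Q : ℝ → H →L[ℝ] H) (t : ℝ) (x y : H) :
    HasSum (fun i => (inner ℝ (e i) x : ℝ) * (inner ℝ (Q t (e i)) y : ℝ))
      (inner ℝ (Q t x) y : ℝ) := by
  have h3 := (hasSum_Q_apply e Q t x).mapL (innerSL ℝ y)
  simp only [innerSL_apply_apply, inner_smul_right, smul_eq_mul] at h3
  have h4 : ∀ i, (inner ℝ y (Q t (e i)) : ℝ) = (inner ℝ (Q t (e i)) y : ℝ) :=
    fun i => real_inner_comm _ _
  have h5 : (inner ℝ y (Q t x) : ℝ) = (inner ℝ (Q t x) y : ℝ) := real_inner_comm _ _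
  simpa [h4, h5] using h3

lemma meas_inner_basis (e : HilbertBasis ℕ ℝ H) (Q : ℝ → H →L[ℝ] H)
    (hQm : ∀ i j : ℕ, Measurable fun t => (inner ℝ (Q t (e i)) (e j) : ℝ)) (i : ℕ) (y : H) :
    Measurable fun t => (inner ℝ (Q t (e i)) y : ℝ) := by
  apply measurable_of_tendsto_metrizable
    (f := fun n t => ∑ j ∈ Finset.range n,
      (inner ℝ (Q t (e i)) (e j) : ℝ) * (inner ℝ (e j) y : ℝ))
    (fun n => Finset.measurable_sum _ fun j _ => ((hQm i j).mul_const _))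
  rw [tendsto_pi_nhds]
  intro t
  exact (e.hasSum_inner_mul_inner (Q t (e i)) y).tendsto_sum_nat

lemma meas_inner_Q (e : HilbertBasis ℕ ℝ H) (Q : ℝ → H →L[ℝ] H)
    (hQm : ∀ i j : ℕ, Measurable fun t => (inner ℝ (Q t (e i)) (e j) : ℝ)) (x y : H) :
    Measurable fun t => (inner ℝ (Q t x) y : ℝ) := by
  apply measurable_of_tendsto_metrizable
    (f := fun n t => ∑ i ∈ Finset.range n,
      (inner ℝ (e i) x : ℝ) * (inner ℝ (Q t (e i)) y : ℝ))
    (fun n => Finset.measurable_sum _ fun i _ =>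
      (meas_inner_basis e Q hQm i y).const_mul _)
  rw [tendsto_pi_nhds]
  intro t
  exact (hasSum_inner_Q e Q t x y).tendsto_sum_nat

lemma meas_inner_Q_self (e : HilbertBasis ℕ ℝ H) (Q : ℝ → H →L[ℝ] H)
    (hQm : ∀ i j : ℕ, Measurable fun t => (inner ℝ (Q t (e i)) (e j) : ℝ)) (i : ℕ) :
    Measurable fun t => (inner ℝ (Q t (e i)) (Q t (e i)) : ℝ) := by
  apply measurable_of_tendsto_metrizable
    (f := fun n t => ∑ j ∈ Finset.range n,
      (inner ℝ (Q t (e i)) (e j) : ℝ) * (inner ℝ (Q t (e i)) (e j) : ℝ))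
    (fun n => Finset.measurable_sum _ fun j _ => ((hQm i j).mul (hQm i j)))
  rw [tendsto_pi_nhds]
  intro t
  have h1 := (e.hasSum_inner_mul_inner (Q t (e i)) (Q t (e i))).tendsto_sum_nat
  have h2 : ∀ j, (inner ℝ (e j) (Q t (e i)) : ℝ) = (inner ℝ (Q t (e i)) (e j) : ℝ) :=
    fun j => real_inner_comm _ _
  simpa [h2] using h1

/-- The (squared) Hilbert-Schmidt weight. -/
def wQ (e : HilbertBasis ℕ ℝ H) (Q : ℝ → H →L[ℝ] H) : ℝ → ℝ≥0∞ :=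
  fun t => ∑' i : ℕ, (‖Q t (e i)‖₊ : ℝ≥0∞) ^ 2

lemma meas_wQ (e : HilbertBasis ℕ ℝ H) (Q : ℝ → H →L[ℝ] H)
    (hQm : ∀ i j : ℕ, Measurable fun t => (inner ℝ (Q t (e i)) (e j) : ℝ)) :
    Measurable (wQ e Q) := by
  apply Measurable.ennreal_tsum
  intro i
  have h1 : (fun t => (‖Q t (e i)‖₊ : ℝ≥0∞) ^ 2)
      = fun t => ENNReal.ofReal ((inner ℝ (Q t (e i)) (Q t (e i)) : ℝ)) := by
    funext t
    rw [real_inner_self_eq_norm_sq, ← enorm_eq_nnnorm, ← ofReal_norm, ← ENNReal.ofReal_pow (norm_nonneg _)]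
  rw [h1]
  exact ENNReal.measurable_ofReal.comp (meas_inner_Q_self e Q hQm i)

lemma norm_Q_apply_le (e : HilbertBasis ℕ ℝ H) (Q : ℝ → H →L[ℝ] H) (t : ℝ)
    (hw : wQ e Q t ≠ ∞) (x : H) :
    ‖Q t x‖ ≤ ‖x‖ * Real.sqrt ((wQ e Q t).toReal) := by
  set W := (wQ e Q t).toReal with hW
  have hWnn : (0:ℝ) ≤ W := ENNReal.toReal_nonneg
  have hterm : ∀ n : ℕ,
      ∑ i ∈ Finset.range n, |(inner ℝ (e i) x : ℝ)| * ‖Q t (e i)‖ ≤ ‖x‖ * Real.sqrt W := by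
    intro n
    have hcs := Finset.sum_mul_sq_le_sq_mul_sq (Finset.range n)
      (fun i => |(inner ℝ (e i) x : ℝ)|) (fun i => ‖Q t (e i)‖)
    have h1 : ∑ i ∈ Finset.range n, |(inner ℝ (e i) x : ℝ)| ^ 2 ≤ ‖x‖ ^ 2 := by
      have hb := Orthonormal.sum_inner_products_le (s := Finset.range n) x e.orthonormal
      simpa [Real.norm_eq_abs] using hb
    have h2 : ∑ i ∈ Finset.range n, ‖Q t (e i)‖ ^ 2 ≤ W := by
      have h3 : ∑ i ∈ Finset.range n, ((‖Q t (e i)‖₊ : ℝ≥0∞)) ^ 2 ≤ wQ e Q t :=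
        ENNReal.sum_le_tsum _
      have h4 := ENNReal.toReal_mono hw h3
      rw [ENNReal.toReal_sum (fun i _ => by
        exact ENNReal.pow_ne_top ENNReal.coe_ne_top)] at h4
      simpa [ENNReal.toReal_pow] using h4
    have hSnn : (0:ℝ) ≤ ∑ i ∈ Finset.range n, |(inner ℝ (e i) x : ℝ)| * ‖Q t (e i)‖ :=
      Finset.sum_nonneg fun i _ => mul_nonneg (abs_nonneg _) (norm_nonneg _)
    have hle : (∑ i ∈ Finset.range n, |(inner ℝ (e i) x : ℝ)| * ‖Q t (e i)‖) ^ 2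
        ≤ ‖x‖ ^ 2 * W := by
      refine hcs.trans ?_
      exact mul_le_mul h1 h2 (Finset.sum_nonneg fun i _ => sq_nonneg _) (sq_nonneg _)
    have h6 : (‖x‖ * Real.sqrt W) ^ 2 = ‖x‖ ^ 2 * W := by
      rw [mul_pow, Real.sq_sqrt hWnn]
    nlinarith [mul_nonneg (norm_nonneg x) (Real.sqrt_nonneg W), hSnn]
  have hsum : Summable (fun i => |(inner ℝ (e i) x : ℝ)| * ‖Q t (e i)‖) :=
    summable_of_sum_range_le (fun i => mul_nonneg (abs_nonneg _) (norm_nonneg _)) hterm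
  have hsum' : Summable (fun i => ‖(inner ℝ (e i) x : ℝ) • Q t (e i)‖) := by
    simpa [norm_smul, Real.norm_eq_abs] using hsum
  have h7 : ‖Q t x‖ ≤ ∑' i, ‖(inner ℝ (e i) x : ℝ) • Q t (e i)‖ := by
    rw [← (hasSum_Q_apply e Q t x).tsum_eq]
    exact norm_tsum_le_tsum_norm hsum'
  refine h7.trans ?_
  have h8 : ∀ i, ‖(inner ℝ (e i) x : ℝ) • Q t (e i)‖ = |(inner ℝ (e i) x : ℝ)| * ‖Q t (e i)‖ := by
    intro i; rw [norm_smul, Real.norm_eq_abs]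
  calc ∑' i, ‖(inner ℝ (e i) x : ℝ) • Q t (e i)‖
      = ∑' i, |(inner ℝ (e i) x : ℝ)| * ‖Q t (e i)‖ := by simp only [h8]
  _ ≤ ‖x‖ * Real.sqrt W := Summable.tsum_le_of_sum_range_le hsum hterm

lemma integrable_sqrt_wQ (e : HilbertBasis ℕ ℝ H) (Q : ℝ → H →L[ℝ] H)
    (hQm : ∀ i j : ℕ, Measurable fun t => (inner ℝ (Q t (e i)) (e j) : ℝ))
    {μ : Measure ℝ} [IsFiniteMeasure μ]
    (hHS : (∫⁻ t, wQ e Q t ∂μ) < ∞) :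
    Integrable (fun t => Real.sqrt ((wQ e Q t).toReal)) μ := by
  have hsm : Measurable fun t => Real.sqrt ((wQ e Q t).toReal) :=
    Real.continuous_sqrt.measurable.comp (ENNReal.measurable_toReal.comp (meas_wQ e Q hQm))
  refine ⟨hsm.aestronglyMeasurable, ?_⟩
  have hb : ∀ t, (‖Real.sqrt ((wQ e Q t).toReal)‖₊ : ℝ≥0∞) ≤ 1 + wQ e Q t := by
    intro t
    set W := (wQ e Q t).toReal with hWdef
    have hWnn : (0:ℝ) ≤ W := ENNReal.toReal_nonneg
    have h1 : Real.sqrt W ≤ 1 + W := by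
      have h0 : W ≤ (1 + W)^2 := by nlinarith
      calc Real.sqrt W ≤ Real.sqrt ((1+W)^2) := Real.sqrt_le_sqrt h0
      _ = |1 + W| := Real.sqrt_sq_eq_abs _
      _ = 1 + W := abs_of_nonneg (by linarith)
    rw [← enorm_eq_nnnorm, ← ofReal_norm, Real.norm_eq_abs, abs_of_nonneg (Real.sqrt_nonneg _)]
    calc ENNReal.ofReal (Real.sqrt W) ≤ ENNReal.ofReal (1 + W) := ENNReal.ofReal_le_ofReal h1
    _ = ENNReal.ofReal 1 + ENNReal.ofReal W := ENNReal.ofReal_add (by norm_num) hWnn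
    _ ≤ 1 + wQ e Q t := by
        rw [ENNReal.ofReal_one]
        exact add_le_add_right ENNReal.ofReal_toReal_le _
  have hfin : (∫⁻ t, (‖Real.sqrt ((wQ e Q t).toReal)‖₊ : ℝ≥0∞) ∂μ) < ∞ := by
    calc (∫⁻ t, (‖Real.sqrt ((wQ e Q t).toReal)‖₊ : ℝ≥0∞) ∂μ)
        ≤ ∫⁻ t, (1 + wQ e Q t) ∂μ := lintegral_mono hb
    _ = (∫⁻ _, (1:ℝ≥0∞) ∂μ) + ∫⁻ t, wQ e Q t ∂μ :=
        lintegral_add_left measurable_const _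
    _ < ∞ := by
        rw [lintegral_const, one_mul]
        exact ENNReal.add_lt_top.2 ⟨measure_lt_top _ _, hHS⟩
  exact hfin

lemma integrable_inner_Q (e : HilbertBasis ℕ ℝ H) (Q : ℝ → H →L[ℝ] H)
    (hQm : ∀ i j : ℕ, Measurable fun t => (inner ℝ (Q t (e i)) (e j) : ℝ))
    {μ : Measure ℝ} [IsFiniteMeasure μ]
    (hHS : (∫⁻ t, wQ e Q t ∂μ) < ∞) (x y : H) :
    Integrable (fun t => (inner ℝ (Q t x) y : ℝ)) μ := by
  refine Integrable.mono' ((integrable_sqrt_wQ e Q hQm hHS).const_mul (‖x‖ * ‖y‖))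
    ((meas_inner_Q e Q hQm x y).aestronglyMeasurable) ?_
  filter_upwards [ae_lt_top (meas_wQ e Q hQm) hHS.ne] with t hwt
  have h1 : |(inner ℝ (Q t x) y : ℝ)| ≤ ‖Q t x‖ * ‖y‖ := abs_real_inner_le_norm _ _
  have h2 := norm_Q_apply_le e Q t hwt.ne x
  have h3 : ‖Q t x‖ * ‖y‖ ≤ (‖x‖ * Real.sqrt ((wQ e Q t).toReal)) * ‖y‖ :=
    mul_le_mul_of_nonneg_right h2 (norm_nonneg _)
  rw [Real.norm_eq_abs]
  calc |(inner ℝ (Q t x) y : ℝ)| ≤ ‖Q t x‖ * ‖y‖ := h1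
  _ ≤ (‖x‖ * Real.sqrt ((wQ e Q t).toReal)) * ‖y‖ := h3
  _ = ‖x‖ * ‖y‖ * Real.sqrt ((wQ e Q t).toReal) := by ring

end Stmt17
end PartD

section PartE
namespace Stmt17

def rankOne (x₀ y₀ : H) : H →L[ℝ] H := (innerSL ℝ x₀).smulRight y₀

lemma rankOne_apply (x₀ y₀ z : H) : rankOne x₀ y₀ z = (inner ℝ x₀ z : ℝ) • y₀ := rfl

lemma tsum_inner_rankOne (R : H →L[ℝ] H) (e : HilbertBasis ℕ ℝ H) (x y : H) :
    ∑' i : ℕ, (inner ℝ (R (e i)) ((rankOne x y) (e i)) : ℝ) = (inner ℝ (R x) y : ℝ) := by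
  have h1 : HasSum (fun i => (inner ℝ (e i) x : ℝ) * (inner ℝ (R (e i)) y : ℝ))
      (inner ℝ (R x) y : ℝ) := hasSum_inner_Q e (fun _ => R) 0 x y
  have h2 : ∀ i : ℕ, (inner ℝ (R (e i)) ((rankOne x y) (e i)) : ℝ)
      = (inner ℝ (e i) x : ℝ) * (inner ℝ (R (e i)) y : ℝ) := by
    intro i
    rw [rankOne_apply, real_inner_smul_right, real_inner_comm x (e i)]
  rw [tsum_congr h2]
  exact h1.tsum_eq

lemma tsum_inner_indicator_rankOne (R : H →L[ℝ] H) (e : HilbertBasis ℕ ℝ H) (x y : H)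
    (S : Set ℝ) (t : ℝ) :
    ∑' i : ℕ, (inner ℝ (R (e i)) ((S.indicator (fun _ => (1:ℝ)) t • rankOne x y) (e i)) : ℝ)
      = S.indicator (fun _ => (1:ℝ)) t * (inner ℝ (R x) y : ℝ) := by
  by_cases ht : t ∈ S
  · rw [Set.indicator_of_mem ht, one_smul, one_mul]
    exact tsum_inner_rankOne R e x y
  · rw [Set.indicator_of_notMem ht, zero_smul, zero_mul]
    simp

lemma summable_inner_sq (e : HilbertBasis ℕ ℝ H) (x : H) :
    Summable (fun i : ℕ => ((inner ℝ x (e i) : ℝ))^2) := by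
  have h1 := e.summable_inner_mul_inner x x
  have h2 : ∀ i : ℕ, (inner ℝ x (e i) : ℝ) * (inner ℝ (e i) x : ℝ) = ((inner ℝ x (e i) : ℝ))^2 := by
    intro i
    rw [real_inner_comm (e i) x]; ring
  simpa [h2] using h1

lemma hs_bound_rankOne (T : ℝ) (e : HilbertBasis ℕ ℝ H) (x y : H) (S : Set ℝ) :
    (∫⁻ t in Set.Icc (0:ℝ) T,
      ∑' i : ℕ, (‖(S.indicator (fun _ => (1:ℝ)) t • rankOne x y) (e i)‖₊ : ℝ≥0∞) ^ 2) < ∞ := by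
  set K : ℝ≥0∞ := ∑' i : ℕ, (‖(rankOne x y) (e i)‖₊ : ℝ≥0∞) ^ 2 with hK
  have hKfin : K ≠ ∞ := by
    have h1 : ∀ i : ℕ, (‖(rankOne x y) (e i)‖₊ : ℝ≥0∞) ^ 2
        = ((‖(rankOne x y) (e i)‖₊ ^ 2 : ℝ≥0) : ℝ≥0∞) := by
      intro i; exact (ENNReal.coe_pow _ (n := 2)).symm
    rw [hK]
    simp only [h1]
    rw [ENNReal.tsum_coe_ne_top_iff_summable]
    rw [← NNReal.summable_coe]
    have h2 : ∀ i : ℕ, ((‖(rankOne x y) (e i)‖₊ ^ 2 : ℝ≥0) : ℝ)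
        = ((inner ℝ x (e i) : ℝ))^2 * ‖y‖^2 := by
      intro i
      rw [NNReal.coe_pow, coe_nnnorm, rankOne_apply, norm_smul, Real.norm_eq_abs,
        mul_pow, sq_abs]
    simp only [h2]
    exact (summable_inner_sq e x).mul_right _
  have hptw : ∀ t : ℝ, (∑' i : ℕ,
      (‖(S.indicator (fun _ => (1:ℝ)) t • rankOne x y) (e i)‖₊ : ℝ≥0∞) ^ 2) ≤ K := by
    intro t
    by_cases ht : t ∈ S
    · rw [Set.indicator_of_mem ht, one_smul]
    · rw [Set.indicator_of_notMem ht, zero_smul]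
      simp
  calc (∫⁻ t in Set.Icc (0:ℝ) T,
      ∑' i : ℕ, (‖(S.indicator (fun _ => (1:ℝ)) t • rankOne x y) (e i)‖₊ : ℝ≥0∞) ^ 2)
      ≤ ∫⁻ _ in Set.Icc (0:ℝ) T, K := lintegral_mono hptw
  _ = K * (volume.restrict (Set.Icc (0:ℝ) T)) Set.univ := lintegral_const K
  _ < ∞ := by
      apply ENNReal.mul_lt_top hKfin.lt_top
      rw [Measure.restrict_apply_univ]
      exact measure_Icc_lt_top

lemma tendsto_setIntegral_inner
    (T : ℝ) (fn : ℕ → ℝ → ℝ → ℝ) (hfnmeas : ∀ n t, Measurable (fn n t))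
    (e : HilbertBasis ℕ ℝ H) (Pinf : ℝ → H →L[ℝ] H)
    (ha : ∀ A : ℝ → H →L[ℝ] H,
      (∀ i j : ℕ, Measurable fun t => (inner ℝ (A t (e i)) (e j) : ℝ)) →
      (∫⁻ t in Set.Icc (0:ℝ) T, ∑' i : ℕ, (‖A t (e i)‖₊ : ℝ≥0∞) ^ 2) < ∞ →
      Tendsto (fun n => ∫ t in Set.Icc (0:ℝ) T,
          ∑' i : ℕ, (inner ℝ (projOp (fn n t) (hfnmeas n t) (e i)) (A t (e i)) : ℝ)) atTop
        (nhds (∫ t in Set.Icc (0:ℝ) T, ∑' i : ℕ, (inner ℝ (Pinf t (e i)) (A t (e i)) : ℝ))))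
    (x y : H) (S : Set ℝ) (hS : MeasurableSet S) :
    Tendsto (fun n => ∫ t in Set.Icc (0:ℝ) T,
        S.indicator (fun _ => (1:ℝ)) t * (inner ℝ (projOp (fn n t) (hfnmeas n t) x) y : ℝ)) atTop
      (nhds (∫ t in Set.Icc (0:ℝ) T,
        S.indicator (fun _ => (1:ℝ)) t * (inner ℝ (Pinf t x) y : ℝ))) := by
  have hmeas : ∀ i j : ℕ, Measurable fun t =>
      (inner ℝ ((S.indicator (fun _ => (1:ℝ)) t • rankOne x y) (e i)) (e j) : ℝ) := by
    intro i j
    have heq : (fun t => (inner ℝ ((S.indicator (fun _ => (1:ℝ)) t • rankOne x y) (e i)) (e j) : ℝ))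
        = fun t => S.indicator (fun _ => (1:ℝ)) t * (inner ℝ ((rankOne x y) (e i)) (e j) : ℝ) := by
      funext t
      rw [ContinuousLinearMap.smul_apply, real_inner_smul_left]
    rw [heq]
    exact (measurable_const.indicator hS).mul_const _
  have h1 := ha (fun t => S.indicator (fun _ => (1:ℝ)) t • rankOne x y) hmeas
    (hs_bound_rankOne T e x y S)
  have h2 : (fun n => ∫ t in Set.Icc (0:ℝ) T, ∑' i : ℕ,
      (inner ℝ (projOp (fn n t) (hfnmeas n t) (e i))
        ((S.indicator (fun _ => (1:ℝ)) t • rankOne x y) (e i)) : ℝ))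
      = fun n => ∫ t in Set.Icc (0:ℝ) T,
        S.indicator (fun _ => (1:ℝ)) t * (inner ℝ (projOp (fn n t) (hfnmeas n t) x) y : ℝ) := by
    funext n
    apply integral_congr_ae
    exact ae_of_all _ fun t => tsum_inner_indicator_rankOne _ e x y S t
  have h3 : (∫ t in Set.Icc (0:ℝ) T, ∑' i : ℕ,
      (inner ℝ (Pinf t (e i)) ((S.indicator (fun _ => (1:ℝ)) t • rankOne x y) (e i)) : ℝ))
      = ∫ t in Set.Icc (0:ℝ) T,
        S.indicator (fun _ => (1:ℝ)) t * (inner ℝ (Pinf t x) y : ℝ) := by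
    apply integral_congr_ae
    exact ae_of_all _ fun t => tsum_inner_indicator_rankOne _ e x y S t
  rw [h2, h3] at h1
  exact h1

end Stmt17
end PartE

section PartF1
namespace Stmt17

lemma ofReal_sq_le_liminf {a : ℕ → ℝ} {b : ℝ} (hb : 0 ≤ b) (hnn : ∀ n, 0 ≤ a n)
    (hle : b ≤ liminf a atTop) :
    ENNReal.ofReal (b^2) ≤ liminf (fun n => ENNReal.ofReal (a n ^ 2)) atTop := by
  rcases eq_or_lt_of_le hb with hb0 | hbpos
  · simp [← hb0]
  have hbb : ∀ k : ℕ, ENNReal.ofReal ((b - b/(k+2))^2)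
      ≤ liminf (fun n => ENNReal.ofReal (a n ^ 2)) atTop := by
    intro k
    have hεpos : 0 < b/(k+2) := by positivity
    have hεlt : b/(k+2) < b := by
      apply div_lt_self hbpos
      have : (0:ℝ) ≤ (k:ℝ) := Nat.cast_nonneg k
      linarith
    have h1 : b - b/(k+2) < liminf a atTop := by
      have : b - b/(k+2) < b := by linarith
      exact lt_of_lt_of_le this hle
    have h2 : ∀ᶠ n in atTop, b - b/(k+2) < a n :=
      eventually_lt_of_lt_liminf h1 ⟨0, Filter.eventually_map.2 (Eventually.of_forall hnn)⟩
    have h3 : ∀ᶠ n in atTop, ENNReal.ofReal ((b - b/(k+2))^2) ≤ ENNReal.ofReal (a n ^ 2) := by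
      filter_upwards [h2] with n hn
      apply ENNReal.ofReal_le_ofReal
      have hge : 0 ≤ b - b/(k+2) := by linarith
      nlinarith
    exact le_liminf_of_le (by isBoundedDefault) h3
  have htend : Tendsto (fun k : ℕ => ENNReal.ofReal ((b - b/(k+2))^2)) atTop
      (nhds (ENNReal.ofReal (b^2))) := by
    apply (ENNReal.continuous_ofReal.tendsto _).comp
    have h4 : Tendsto (fun k : ℕ => b/(k+2)) atTop (nhds 0) := by
      apply Tendsto.div_atTop (tendsto_const_nhds)
      have h5 : Tendsto (fun k : ℕ => ((k:ℝ) + 2)) atTop atTop :=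
        tendsto_atTop_add_const_right _ 2 tendsto_natCast_atTop_atTop
      exact h5
    have h6 : Tendsto (fun k : ℕ => b - b/(k+2)) atTop (nhds b) := by
      simpa using tendsto_const_nhds.sub h4
    have h7 : Tendsto (fun k : ℕ => (b - b/(k+2))^2) atTop (nhds (b^2)) := by
      simpa using h6.pow 2
    exact h7
  exact le_of_tendsto htend (Eventually.of_forall hbb)

lemma closure_span_eq_univ (e : HilbertBasis ℕ ℝ H) :
    closure ((Submodule.span ℝ (Set.range fun i => e i) : Submodule ℝ H) : Set H) = Set.univ := by
  have h1 : (Submodule.span ℝ (Set.range fun i => e i)).topologicalClosure = ⊤ := e.dense_span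
  calc closure ((Submodule.span ℝ (Set.range fun i => e i) : Submodule ℝ H) : Set H)
      = ((Submodule.span ℝ (Set.range fun i => e i)).topologicalClosure : Set H) :=
        (Submodule.topologicalClosure_coe _).symm
  _ = ((⊤ : Submodule ℝ H) : Set H) := by rw [h1]
  _ = Set.univ := by simp

lemma exists_countable_dense_subset (e : HilbertBasis ℕ ℝ H) :
    ∃ D : Set H, D.Countable ∧ Dense D := by
  classical
  set f : (ℕ →₀ ℚ) → H := fun q => q.sum fun i a => (a:ℝ) • e i with hf
  refine ⟨Set.range f, Set.countable_range f, ?_⟩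
  have hspan : (Submodule.span ℝ (Set.range fun i => e i) : Set H) ⊆ closure (Set.range f) := by
    intro x hx
    have hx' : x ∈ Submodule.span ℝ (Set.range fun i => e i) := hx
    rw [Finsupp.mem_span_range_iff_exists_finsupp] at hx'
    obtain ⟨c, hc⟩ := hx' 
    rw [Metric.mem_closure_iff]
    intro ε hε
    set n : ℕ := c.support.card with hn
    set δ : ℝ := ε / (n + 1) with hδ
    have hδpos : 0 < δ := by positivity
    have hq : ∀ i : ℕ, ∃ q : ℚ, |c i - q| < δ := fun i => exists_rat_near (c i) hδpos
    choose q hq using hq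
    set qf : ℕ →₀ ℚ := Finsupp.onFinset c.support (fun i => if i ∈ c.support then q i else 0)
      (fun i hi => by by_contra hmem; simp [hmem] at hi) with hqf
    refine ⟨f qf, Set.mem_range_self qf, ?_⟩
    have hsupp : qf.support ⊆ c.support := Finsupp.support_onFinset_subset
    have hfq : f qf = ∑ i ∈ c.support, ((qf i : ℚ) : ℝ) • e i := by
      rw [hf]
      exact Finsupp.sum_of_support_subset qf hsupp _ (fun i _ => by simp)
    have hx2 : x = ∑ i ∈ c.support, (c i) • e i := by
      rw [← hc]; rfl
    have hqf_eq : ∀ i ∈ c.support, ((qf i : ℚ) : ℝ) = (q i : ℝ) := by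
      intro i hi
      rw [hqf]
      rw [Finsupp.onFinset_apply, if_pos hi]
    rw [dist_eq_norm, hx2, hfq]
    have hsub : (∑ i ∈ c.support, (c i) • e i) - (∑ i ∈ c.support, ((qf i : ℚ) : ℝ) • e i)
        = ∑ i ∈ c.support, ((c i) - ((qf i : ℚ) : ℝ)) • e i := by
      rw [← Finset.sum_sub_distrib]
      congr 1
      funext i
      rw [sub_smul]
    rw [hsub]
    have hbound : ‖∑ i ∈ c.support, ((c i) - ((qf i : ℚ) : ℝ)) • e i‖
        ≤ ∑ i ∈ c.support, δ := by
      refine (norm_sum_le _ _).trans ?_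
      apply Finset.sum_le_sum
      intro i hi
      rw [norm_smul, Real.norm_eq_abs]
      have he1 : ‖e i‖ = 1 := e.orthonormal.1 i
      rw [he1, mul_one, hqf_eq i hi]
      exact (hq i).le
    have hcard : (∑ i ∈ c.support, δ) = n * δ := by
      rw [Finset.sum_const, hn, nsmul_eq_mul]
    have hfinal : (n : ℝ) * δ < ε := by
      have h9 : (0:ℝ) < (n:ℝ) + 1 := by positivity
      rw [hδ]
      calc (n:ℝ) * (ε/((n:ℝ)+1)) = ε * ((n:ℝ)/((n:ℝ)+1)) := by ring
      _ < ε * 1 := by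
          apply mul_lt_mul_of_pos_left _ hε
          rw [div_lt_one h9]
          linarith
      _ = ε := mul_one ε
    calc ‖∑ i ∈ c.support, ((c i) - ((qf i : ℚ) : ℝ)) • e i‖ ≤ ∑ i ∈ c.support, δ := hbound
    _ = n * δ := hcard
    _ < ε := hfinal
  have hclosure : closure (Submodule.span ℝ (Set.range fun i => e i) : Set H) = Set.univ :=
    closure_span_eq_univ e
  rw [dense_iff_closure_eq]
  rw [← Set.univ_subset_iff]
  calc Set.univ = closure (Submodule.span ℝ (Set.range fun i => e i) : Set H) := hclosure.symm
  _ ⊆ closure (closure (Set.range f)) := closure_mono hspan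
  _ = closure (Set.range f) := closure_closure

end Stmt17
end PartF1

section PartF2
namespace Stmt17

lemma indicator_integral_eq (μ' : Measure ℝ) {S : Set ℝ} (hS : MeasurableSet S) (q : ℝ → ℝ) :
    (∫ t, S.indicator (fun _ => (1:ℝ)) t * q t ∂μ') = ∫ t in S, q t ∂μ' := by
  rw [← integral_indicator hS]
  congr 1
  funext t
  by_cases ht : t ∈ S
  · simp [Set.indicator_of_mem ht]
  · simp [Set.indicator_of_notMem ht]

lemma ae_inner_Pinf_le
    (T : ℝ) (fn : ℕ → ℝ → ℝ → ℝ) (hfnmeas : ∀ n t, Measurable (fn n t))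
    (e : HilbertBasis ℕ ℝ H) (Pinf : ℝ → H →L[ℝ] H)
    (hQm : ∀ i j : ℕ, Measurable fun t => (inner ℝ (Pinf t (e i)) (e j) : ℝ))
    (hHS : (∫⁻ t, wQ e Pinf t ∂(volume.restrict (Set.Icc (0:ℝ) T))) < ∞)
    (hlim : ∀ x y : H, ∀ S : Set ℝ, MeasurableSet S →
      Tendsto (fun n => ∫ t in Set.Icc (0:ℝ) T,
          S.indicator (fun _ => (1:ℝ)) t * (inner ℝ (projOp (fn n t) (hfnmeas n t) x) y : ℝ)) atTop
        (nhds (∫ t in Set.Icc (0:ℝ) T,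
          S.indicator (fun _ => (1:ℝ)) t * (inner ℝ (Pinf t x) y : ℝ))))
    (x y : H) :
    ∀ᵐ t ∂(volume.restrict (Set.Icc (0:ℝ) T)), (inner ℝ (Pinf t x) y : ℝ) ≤ ‖x‖ * ‖y‖ := by
  haveI : IsFiniteMeasure (volume.restrict (Set.Icc (0:ℝ) T)) :=
    ⟨by rw [Measure.restrict_apply_univ]; exact measure_Icc_lt_top⟩
  set μ' := volume.restrict (Set.Icc (0:ℝ) T) with hμ'
  have hint : Integrable (fun t => (inner ℝ (Pinf t x) y : ℝ)) μ' :=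
    integrable_inner_Q e Pinf hQm hHS x y
  have key : ∀ S : Set ℝ, MeasurableSet S →
      (∫ t in S, (inner ℝ (Pinf t x) y : ℝ) ∂μ') ≤ (‖x‖ * ‖y‖) * (μ' S).toReal := by
    intro S hS
    have h1 := hlim x y S hS
    have hboundn : ∀ n, (∫ t, S.indicator (fun _ => (1:ℝ)) t
        * (inner ℝ (projOp (fn n t) (hfnmeas n t) x) y : ℝ) ∂μ')
        ≤ (‖x‖ * ‖y‖) * (μ' S).toReal := by
      intro n
      rw [indicator_integral_eq μ' hS]
      have h2 := norm_integral_le_of_norm_le_const (μ := μ'.restrict S)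
        (f := fun t => (inner ℝ (projOp (fn n t) (hfnmeas n t) x) y : ℝ)) (C := ‖x‖ * ‖y‖)
        (ae_of_all _ fun t => by
          rw [Real.norm_eq_abs]
          calc |(inner ℝ (projOp (fn n t) (hfnmeas n t) x) y : ℝ)|
              ≤ ‖projOp (fn n t) (hfnmeas n t) x‖ * ‖y‖ := abs_real_inner_le_norm _ _
          _ ≤ ‖x‖ * ‖y‖ :=
              mul_le_mul_of_nonneg_right (norm_projOp_le _ _ _) (norm_nonneg _))
      rw [measureReal_restrict_apply_univ] at h2
      rw [Real.norm_eq_abs] at h2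
      calc (∫ t in S, (inner ℝ (projOp (fn n t) (hfnmeas n t) x) y : ℝ) ∂μ')
          ≤ |∫ t in S, (inner ℝ (projOp (fn n t) (hfnmeas n t) x) y : ℝ) ∂μ'| := le_abs_self _
      _ ≤ (‖x‖ * ‖y‖) * (μ' S).toReal := h2
    rw [← indicator_integral_eq μ' hS]
    exact le_of_tendsto h1 (Eventually.of_forall hboundn)
  have h3 := ae_nonneg_of_forall_setIntegral_nonneg
    ((integrable_const (‖x‖ * ‖y‖)).sub hint) ?_
  · filter_upwards [h3] with t ht
    simp only [Pi.sub_apply, Pi.zero_apply] at ht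
    linarith
  · intro S hS hμS
    simp only [Pi.sub_apply]
    rw [integral_sub (integrable_const _) hint.restrict]
    rw [setIntegral_const]
    have h4 := key S hS
    simp only [smul_eq_mul]
    rw [show μ'.real S = (μ' S).toReal from rfl]
    linarith

lemma ae_inner_Pinf_nonneg
    (T : ℝ) (fn : ℕ → ℝ → ℝ → ℝ) (hfnmeas : ∀ n t, Measurable (fn n t))
    (e : HilbertBasis ℕ ℝ H) (Pinf : ℝ → H →L[ℝ] H)
    (hQm : ∀ i j : ℕ, Measurable fun t => (inner ℝ (Pinf t (e i)) (e j) : ℝ))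
    (hHS : (∫⁻ t, wQ e Pinf t ∂(volume.restrict (Set.Icc (0:ℝ) T))) < ∞)
    (hlim : ∀ x y : H, ∀ S : Set ℝ, MeasurableSet S →
      Tendsto (fun n => ∫ t in Set.Icc (0:ℝ) T,
          S.indicator (fun _ => (1:ℝ)) t * (inner ℝ (projOp (fn n t) (hfnmeas n t) x) y : ℝ)) atTop
        (nhds (∫ t in Set.Icc (0:ℝ) T,
          S.indicator (fun _ => (1:ℝ)) t * (inner ℝ (Pinf t x) y : ℝ))))
    (x : H) :
    ∀ᵐ t ∂(volume.restrict (Set.Icc (0:ℝ) T)), 0 ≤ (inner ℝ (Pinf t x) x : ℝ) := by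
  haveI : IsFiniteMeasure (volume.restrict (Set.Icc (0:ℝ) T)) :=
    ⟨by rw [Measure.restrict_apply_univ]; exact measure_Icc_lt_top⟩
  set μ' := volume.restrict (Set.Icc (0:ℝ) T) with hμ'
  have hint : Integrable (fun t => (inner ℝ (Pinf t x) x : ℝ)) μ' :=
    integrable_inner_Q e Pinf hQm hHS x x
  have h3 := ae_nonneg_of_forall_setIntegral_nonneg hint ?_
  · exact h3
  · intro S hS hμS
    rw [← indicator_integral_eq μ' hS]
    refine ge_of_tendsto (hlim x x S hS) (Eventually.of_forall fun n => ?_)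
    refine integral_nonneg fun t => ?_
    by_cases ht : t ∈ S
    · simp only [Set.indicator_of_mem ht, one_mul]
      rw [inner_projOp_self]
      positivity
    · simp [Set.indicator_of_notMem ht]

lemma ae_liminf_le
    (T : ℝ) (fn : ℕ → ℝ → ℝ → ℝ) (hfnmeas : ∀ n t, Measurable (fn n t))
    (hfncont : ∀ n, ∀ t₀ ∈ Set.Icc (0:ℝ) T,
      Tendsto (fun t => eLpNorm (fun u => fn n t u - fn n t₀ u) 2 mu01)
        (nhdsWithin t₀ (Set.Icc (0:ℝ) T)) (nhds 0))
    (e : HilbertBasis ℕ ℝ H) (Pinf : ℝ → H →L[ℝ] H)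
    (hQm : ∀ i j : ℕ, Measurable fun t => (inner ℝ (Pinf t (e i)) (e j) : ℝ))
    (hHS : (∫⁻ t, wQ e Pinf t ∂(volume.restrict (Set.Icc (0:ℝ) T))) < ∞)
    (hlim : ∀ x y : H, ∀ S : Set ℝ, MeasurableSet S →
      Tendsto (fun n => ∫ t in Set.Icc (0:ℝ) T,
          S.indicator (fun _ => (1:ℝ)) t * (inner ℝ (projOp (fn n t) (hfnmeas n t) x) y : ℝ)) atTop
        (nhds (∫ t in Set.Icc (0:ℝ) T,
          S.indicator (fun _ => (1:ℝ)) t * (inner ℝ (Pinf t x) y : ℝ))))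
    (x : H) :
    ∀ᵐ t ∂(volume.restrict (Set.Icc (0:ℝ) T)),
      liminf (fun n => ENNReal.ofReal (‖projOp (fn n t) (hfnmeas n t) x‖^2)) atTop
        ≤ ENNReal.ofReal (inner ℝ (Pinf t x) x : ℝ) := by
  haveI : IsFiniteMeasure (volume.restrict (Set.Icc (0:ℝ) T)) :=
    ⟨by rw [Measure.restrict_apply_univ]; exact measure_Icc_lt_top⟩
  set μ' := volume.restrict (Set.Icc (0:ℝ) T) with hμ'
  have haem : ∀ n, AEMeasurable (fun t => ‖projOp (fn n t) (hfnmeas n t) x‖) μ' :=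
    fun n => aemeasurable_norm_projOp T (hfnmeas n) (hfncont n) x
  have haem2 : ∀ n, AEMeasurable (fun t => ‖projOp (fn n t) (hfnmeas n t) x‖^2) μ' := by
    intro n
    have := (haem n).mul (haem n)
    refine this.congr (ae_of_all _ fun t => ?_)
    exact (sq _).symm
  have hFn : ∀ n, AEMeasurable
      (fun t => ENNReal.ofReal (‖projOp (fn n t) (hfnmeas n t) x‖^2)) μ' :=
    fun n => ENNReal.measurable_ofReal.comp_aemeasurable (haem2 n)
  have hq_int : Integrable (fun t => (inner ℝ (Pinf t x) x : ℝ)) μ' :=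
    integrable_inner_Q e Pinf hQm hHS x x
  have hq_nonneg : ∀ᵐ t ∂μ', 0 ≤ (inner ℝ (Pinf t x) x : ℝ) :=
    ae_inner_Pinf_nonneg T fn hfnmeas e Pinf hQm hHS hlim x
  -- a.e. measurability of the liminf
  have hm : AEMeasurable
      (fun t => liminf (fun n =>
        ENNReal.ofReal (‖projOp (fn n t) (hfnmeas n t) x‖^2)) atTop) μ' := by
    have hGeq : ∀ᵐ t ∂μ', ∀ n,
        ENNReal.ofReal (‖projOp (fn n t) (hfnmeas n t) x‖^2) = (hFn n).mk _ t :=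
      (ae_all_iff).2 fun n => (hFn n).ae_eq_mk
    refine AEMeasurable.congr
      ((Measurable.liminf (fun n => (hFn n).measurable_mk)).aemeasurable) ?_
    filter_upwards [hGeq] with t ht
    have : (fun n => (hFn n).mk _ t)
        = fun n => ENNReal.ofReal (‖projOp (fn n t) (hfnmeas n t) x‖^2) :=
      funext fun n => (ht n).symm
    rw [this]
  apply ae_le_of_forall_setLIntegral_le_of_sigmaFinite₀ hm
  intro S hS hμS
  have hFatou : (∫⁻ t in S, liminf (fun n =>
      ENNReal.ofReal (‖projOp (fn n t) (hfnmeas n t) x‖^2)) atTop ∂μ')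
      ≤ liminf (fun n => ∫⁻ t in S,
        ENNReal.ofReal (‖projOp (fn n t) (hfnmeas n t) x‖^2) ∂μ') atTop :=
    lintegral_liminf_le' (fun n => (hFn n).restrict)
  -- identify each lintegral with an ofReal of a Bochner integral
  have hInt_n : ∀ n, Integrable
      (fun t => (inner ℝ (projOp (fn n t) (hfnmeas n t) x) x : ℝ)) (μ'.restrict S) := by
    intro n
    have hasm : AEMeasurable (fun t => (inner ℝ (projOp (fn n t) (hfnmeas n t) x) x : ℝ)) μ' := by
      refine (haem2 n).congr (ae_of_all _ fun t => ?_)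
      beta_reduce
      rw [inner_projOp_self]
    refine Integrable.mono' (integrable_const (‖x‖^2))
      (hasm.restrict.aestronglyMeasurable) (ae_of_all _ fun t => ?_)
    rw [Real.norm_eq_abs]
    calc |(inner ℝ (projOp (fn n t) (hfnmeas n t) x) x : ℝ)|
        ≤ ‖projOp (fn n t) (hfnmeas n t) x‖ * ‖x‖ := abs_real_inner_le_norm _ _
    _ ≤ ‖x‖ * ‖x‖ := mul_le_mul_of_nonneg_right (norm_projOp_le _ _ _) (norm_nonneg _)
    _ = ‖x‖^2 := (sq ‖x‖).symm
  have hIn : ∀ n, (∫⁻ t in S, ENNReal.ofReal (‖projOp (fn n t) (hfnmeas n t) x‖^2) ∂μ')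
      = ENNReal.ofReal (∫ t in S, (inner ℝ (projOp (fn n t) (hfnmeas n t) x) x : ℝ) ∂μ') := by
    intro n
    rw [ofReal_integral_eq_lintegral_ofReal (hInt_n n)
      (ae_of_all _ fun t => by beta_reduce; rw [inner_projOp_self]; positivity)]
    refine lintegral_congr fun t => ?_
    beta_reduce
    rw [inner_projOp_self]
  -- the limit of the Bochner integrals
  have h1 := hlim x x S hS
  have h2 : Tendsto (fun n => ∫ t in S,
      (inner ℝ (projOp (fn n t) (hfnmeas n t) x) x : ℝ) ∂μ') atTop
      (nhds (∫ t in S, (inner ℝ (Pinf t x) x : ℝ) ∂μ')) := by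
    have e1 : (fun n => ∫ t in Set.Icc (0:ℝ) T,
        S.indicator (fun _ => (1:ℝ)) t * (inner ℝ (projOp (fn n t) (hfnmeas n t) x) x : ℝ))
        = fun n => ∫ t in S, (inner ℝ (projOp (fn n t) (hfnmeas n t) x) x : ℝ) ∂μ' :=
      funext fun n => indicator_integral_eq μ' hS _
    have e2 : (∫ t in Set.Icc (0:ℝ) T,
        S.indicator (fun _ => (1:ℝ)) t * (inner ℝ (Pinf t x) x : ℝ))
        = ∫ t in S, (inner ℝ (Pinf t x) x : ℝ) ∂μ' := indicator_integral_eq μ' hS _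
    rw [e1, e2] at h1
    exact h1
  have h3 : Tendsto (fun n => ENNReal.ofReal (∫ t in S,
      (inner ℝ (projOp (fn n t) (hfnmeas n t) x) x : ℝ) ∂μ')) atTop
      (nhds (ENNReal.ofReal (∫ t in S, (inner ℝ (Pinf t x) x : ℝ) ∂μ'))) :=
    (ENNReal.continuous_ofReal.tendsto _).comp h2
  have h4 : liminf (fun n => ∫⁻ t in S,
      ENNReal.ofReal (‖projOp (fn n t) (hfnmeas n t) x‖^2) ∂μ') atTop
      = ENNReal.ofReal (∫ t in S, (inner ℝ (Pinf t x) x : ℝ) ∂μ') := by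
    have : (fun n => ∫⁻ t in S,
        ENNReal.ofReal (‖projOp (fn n t) (hfnmeas n t) x‖^2) ∂μ')
        = fun n => ENNReal.ofReal (∫ t in S,
          (inner ℝ (projOp (fn n t) (hfnmeas n t) x) x : ℝ) ∂μ') := funext hIn
    rw [this]
    exact h3.liminf_eq
  have h5 : ENNReal.ofReal (∫ t in S, (inner ℝ (Pinf t x) x : ℝ) ∂μ')
      ≤ ∫⁻ t in S, ENNReal.ofReal (inner ℝ (Pinf t x) x : ℝ) ∂μ' := by
    rw [ofReal_integral_eq_lintegral_ofReal hq_int.restrict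
      (ae_restrict_of_ae hq_nonneg)]
  calc (∫⁻ t in S, liminf (fun n =>
      ENNReal.ofReal (‖projOp (fn n t) (hfnmeas n t) x‖^2)) atTop ∂μ')
      ≤ liminf (fun n => ∫⁻ t in S,
        ENNReal.ofReal (‖projOp (fn n t) (hfnmeas n t) x‖^2) ∂μ') atTop := hFatou
  _ = ENNReal.ofReal (∫ t in S, (inner ℝ (Pinf t x) x : ℝ) ∂μ') := h4
  _ ≤ _ := h5

end Stmt17
end PartF2

section PartG
open Stmt17

/-- identification of the limiting projection.  Let
`f, fⁿ ∈ C([0,T], L₂↑)` (given by measurable, nondecreasing-in-`u` representatives),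
`P_t = pr_{f_t}`, `Pⁿ_t = pr_{fⁿ_t}`.  Assume (a) `Pⁿ → P^∞` weakly in
`L²([0,T], HS(L²))` (tested against all Hilbert–Schmidt–valued `A`, with the HS inner
product computed in a Hilbert basis `(eᵢ)`); (b) for a.e. `t` and all `h`,
`‖P_t h‖ ≤ liminf_n ‖Pⁿ_t h‖`; (c) for each `h` and a.e. `t`,
`P^∞_t (P_t h) = P^∞_t h`.  Then `P^∞ = P` a.e. on `[0,T]`. -/
theorem stmt17 (T : ℝ) (hT : 0 < T)
    (f : ℝ → ℝ → ℝ) (fn : ℕ → ℝ → ℝ → ℝ)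
    (hfmono : ∀ t, MonotoneOn (f t) (Set.Ioo (0:ℝ) 1))
    (hfmeas : ∀ t, Measurable (f t))
    (hf2 : ∀ t, MemLp (f t) 2 mu01)
    (hfnmono : ∀ n t, MonotoneOn (fn n t) (Set.Ioo (0:ℝ) 1))
    (hfnmeas : ∀ n t, Measurable (fn n t))
    (hfn2 : ∀ n t, MemLp (fn n t) 2 mu01)
    (hfcont : ∀ t₀ ∈ Set.Icc (0:ℝ) T,
      Tendsto (fun t => eLpNorm (fun u => f t u - f t₀ u) 2 mu01)
        (nhdsWithin t₀ (Set.Icc (0:ℝ) T)) (nhds 0))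
    (hfncont : ∀ n, ∀ t₀ ∈ Set.Icc (0:ℝ) T,
      Tendsto (fun t => eLpNorm (fun u => fn n t u - fn n t₀ u) 2 mu01)
        (nhdsWithin t₀ (Set.Icc (0:ℝ) T)) (nhds 0))
    (e : HilbertBasis ℕ ℝ H)
    (Pinf : ℝ → H →L[ℝ] H)
    (hPinfMeas : ∀ i j : ℕ, Measurable fun t => (inner ℝ (Pinf t (e i)) (e j) : ℝ))
    (hPinfHS : (∫⁻ t in Set.Icc (0:ℝ) T, ∑' i : ℕ, (‖Pinf t (e i)‖₊ : ℝ≥0∞) ^ 2) < ∞)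
    (ha : ∀ A : ℝ → H →L[ℝ] H,
      (∀ i j : ℕ, Measurable fun t => (inner ℝ (A t (e i)) (e j) : ℝ)) →
      (∫⁻ t in Set.Icc (0:ℝ) T, ∑' i : ℕ, (‖A t (e i)‖₊ : ℝ≥0∞) ^ 2) < ∞ →
      Tendsto
        (fun n => ∫ t in Set.Icc (0:ℝ) T,
          ∑' i : ℕ, (inner ℝ (projOp (fn n t) (hfnmeas n t) (e i)) (A t (e i)) : ℝ))
        atTop
        (nhds (∫ t in Set.Icc (0:ℝ) T,
          ∑' i : ℕ, (inner ℝ (Pinf t (e i)) (A t (e i)) : ℝ))))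
    (hb : ∀ᵐ t ∂(volume.restrict (Set.Icc (0:ℝ) T)), ∀ h : H,
      ‖projOp (f t) (hfmeas t) h‖ ≤
        liminf (fun n => ‖projOp (fn n t) (hfnmeas n t) h‖) atTop)
    (hc : ∀ h : H, ∀ᵐ t ∂(volume.restrict (Set.Icc (0:ℝ) T)),
      Pinf t (projOp (f t) (hfmeas t) h) = Pinf t h) :
    ∀ᵐ t ∂(volume.restrict (Set.Icc (0:ℝ) T)), Pinf t = projOp (f t) (hfmeas t) := by
  classical
  haveI : IsFiniteMeasure (volume.restrict (Set.Icc (0:ℝ) T)) :=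
    ⟨by rw [Measure.restrict_apply_univ]; exact measure_Icc_lt_top⟩
  have hHS : (∫⁻ t, wQ e Pinf t ∂(volume.restrict (Set.Icc (0:ℝ) T))) < ∞ := hPinfHS
  have hlim : ∀ x y : H, ∀ S : Set ℝ, MeasurableSet S →
      Tendsto (fun n => ∫ t in Set.Icc (0:ℝ) T,
          S.indicator (fun _ => (1:ℝ)) t * (inner ℝ (projOp (fn n t) (hfnmeas n t) x) y : ℝ)) atTop
        (nhds (∫ t in Set.Icc (0:ℝ) T,
          S.indicator (fun _ => (1:ℝ)) t * (inner ℝ (Pinf t x) y : ℝ))) :=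
    fun x y S hS => tendsto_setIntegral_inner T fn hfnmeas e Pinf ha x y S hS
  obtain ⟨D, hDc, hDd⟩ := exists_countable_dense_subset e
  have hD1 : ∀ᵐ t ∂(volume.restrict (Set.Icc (0:ℝ) T)), ∀ x ∈ D, ∀ y ∈ D,
      (inner ℝ (Pinf t x) y : ℝ) ≤ ‖x‖ * ‖y‖ :=
    (ae_ball_iff hDc).2 fun x _ => (ae_ball_iff hDc).2 fun y _ =>
      ae_inner_Pinf_le T fn hfnmeas e Pinf hPinfMeas hHS hlim x y
  have hD2 : ∀ᵐ t ∂(volume.restrict (Set.Icc (0:ℝ) T)), ∀ x ∈ D,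
      liminf (fun n => ENNReal.ofReal (‖projOp (fn n t) (hfnmeas n t) x‖^2)) atTop
        ≤ ENNReal.ofReal (inner ℝ (Pinf t x) x : ℝ) :=
    (ae_ball_iff hDc).2 fun x _ =>
      ae_liminf_le T fn hfnmeas hfncont e Pinf hPinfMeas hHS hlim x
  have hD3 : ∀ᵐ t ∂(volume.restrict (Set.Icc (0:ℝ) T)), ∀ x ∈ D,
      0 ≤ (inner ℝ (Pinf t x) x : ℝ) :=
    (ae_ball_iff hDc).2 fun x _ =>
      ae_inner_Pinf_nonneg T fn hfnmeas e Pinf hPinfMeas hHS hlim x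
  have hD4 : ∀ᵐ t ∂(volume.restrict (Set.Icc (0:ℝ) T)), ∀ i : ℕ,
      Pinf t (projOp (f t) (hfmeas t) (e i)) = Pinf t (e i) :=
    (ae_all_iff).2 fun i => hc (e i)
  filter_upwards [hD1, hD2, hD3, hD4, hb] with t h1 h2 h3 h4 hbt
  set P := projOp (f t) (hfmeas t) with hPdef
  set Q := Pinf t with hQdef
  -- (i) operator bound
  have hQle : ∀ z y : H, (inner ℝ (Q z) y : ℝ) ≤ ‖z‖ * ‖y‖ := by
    have hclosed : IsClosed {p : H × H | (inner ℝ (Q p.1) p.2 : ℝ) ≤ ‖p.1‖ * ‖p.2‖} := by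
      apply isClosed_le
      · exact Continuous.inner (Q.continuous.comp continuous_fst) continuous_snd
      · exact (continuous_fst.norm).mul (continuous_snd.norm)
    have hsub : (D ×ˢ D : Set (H × H)) ⊆ {p : H × H | (inner ℝ (Q p.1) p.2 : ℝ) ≤ ‖p.1‖ * ‖p.2‖} :=
      fun p hp => h1 p.1 hp.1 p.2 hp.2
    have hdense : Dense (D ×ˢ D : Set (H × H)) := hDd.prod hDd
    intro z y
    have hz : (z, y) ∈ closure (D ×ˢ D : Set (H × H)) := by
      rw [hdense.closure_eq]; trivial
    exact (hclosed.closure_subset_iff.2 hsub) hz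
  have hQnorm : ∀ z : H, ‖Q z‖ ≤ ‖z‖ := by
    intro z
    have h5 := hQle z (Q z)
    rw [real_inner_self_eq_norm_sq] at h5
    rcases eq_or_lt_of_le (norm_nonneg (Q z)) with h0 | h0
    · rw [← h0]; exact norm_nonneg z
    · nlinarith
  -- (ii) lower bound
  have hQlow : ∀ z : H, ‖P z‖^2 ≤ (inner ℝ (Q z) z : ℝ) := by
    have hDlow : ∀ x ∈ D, ‖P x‖^2 ≤ (inner ℝ (Q x) x : ℝ) := by
      intro x hx
      have hb1 : ‖P x‖ ≤ liminf (fun n => ‖projOp (fn n t) (hfnmeas n t) x‖) atTop := hbt x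
      have hb2 := ofReal_sq_le_liminf (norm_nonneg (P x)) (fun n => norm_nonneg _) hb1
      have hb3 := le_trans hb2 (h2 x hx)
      exact (ENNReal.ofReal_le_ofReal_iff (h3 x hx)).1 hb3
    have hclosed : IsClosed {z : H | ‖P z‖^2 ≤ (inner ℝ (Q z) z : ℝ)} :=
      isClosed_le ((P.continuous.norm).pow 2) (Continuous.inner Q.continuous continuous_id)
    intro z
    have hz : z ∈ closure D := by rw [hDd.closure_eq]; trivial
    exact (hclosed.closure_subset_iff.2 hDlow) hz
  -- (iii) Q ∘ P = Q
  have hQP : ∀ z : H, Q (P z) = Q z := by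
    have hle : Submodule.span ℝ (Set.range fun i => e i) ≤ LinearMap.ker ((Q.comp P - Q : H →L[ℝ] H) : H →ₗ[ℝ] H) := by
      rw [Submodule.span_le]
      rintro _ ⟨i, rfl⟩
      rw [SetLike.mem_coe, LinearMap.mem_ker]
      simp only [ContinuousLinearMap.coe_coe, ContinuousLinearMap.coe_sub', Pi.sub_apply, ContinuousLinearMap.coe_comp',
        Function.comp_apply]
      rw [h4 i, sub_self]
    have hkerclosed : IsClosed {z : H | Q (P z) = Q z} :=
      isClosed_eq (Q.continuous.comp P.continuous) Q.continuous
    have hsub : ((Submodule.span ℝ (Set.range fun i => e i) : Submodule ℝ H) : Set H)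
        ⊆ {z : H | Q (P z) = Q z} := by
      intro z hz
      have h6 := hle hz
      rw [LinearMap.mem_ker] at h6
      simp only [ContinuousLinearMap.coe_coe, ContinuousLinearMap.coe_sub', Pi.sub_apply, ContinuousLinearMap.coe_comp',
        Function.comp_apply] at h6
      exact sub_eq_zero.1 h6
    intro z
    have hz : z ∈ closure ((Submodule.span ℝ (Set.range fun i => e i) : Submodule ℝ H) : Set H) := by
      rw [closure_span_eq_univ e]; trivial
    exact (hkerclosed.closure_subset_iff.2 hsub) hz
  -- conclusion
  refine ContinuousLinearMap.ext fun z => ?_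
  have hp : P (P z) = P z := projOp_idem _ _ z
  have h5 : ‖P z‖^2 ≤ (inner ℝ (Q (P z)) (P z) : ℝ) := by
    have h6 := hQlow (P z)
    rwa [hp] at h6
  have h6 : ‖Q (P z)‖ ≤ ‖P z‖ := hQnorm (P z)
  have h7 : Q (P z) = P z := by
    have hexp : ‖Q (P z) - P z‖^2
        = ‖Q (P z)‖^2 - 2 * (inner ℝ (Q (P z)) (P z) : ℝ) + ‖P z‖^2 := norm_sub_sq_real _ _
    have h8 : ‖Q (P z) - P z‖^2 ≤ 0 := by nlinarith [norm_nonneg (Q (P z)), norm_nonneg (P z)]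
    have h9 : ‖Q (P z) - P z‖ = 0 := by nlinarith [norm_nonneg (Q (P z) - P z), sq_nonneg ‖Q (P z) - P z‖]
    rw [norm_sub_eq_zero_iff] at h9
    exact h9
  calc Q z = Q (P z) := (hQP z).symm
  _ = P z := h7


end PartG
end
end
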